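/- arXiv:2301.00398 — 5 statements merged into one kernel-verified Lean document; each statement's English description precedes it below -/
import Mathlib

section
/- For every integer d ≥ 1 and all indices 1 ≤ i, j ≤ d, the limit D_{i,j} := lim_{N→∞} (1/log N) · Σ_{z∈ℤ^d, 0<‖z‖≤N} z_i z_j p(z) exists and is a finite real number, where p is the kernel with exponent α = 2; moreover D_{i,j} = 0 whenever i ≠ j. -/
/-- Euclidean norm of a point of `ℤ^d`. -/
noncomputable def znorm (d : ℕ) (z : Fin d → ℤ) : ℝ :=
  Real.sqrt (∑ i, ((z i : ℝ)) ^ 2)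

/-- The jump kernel `p(z) = ‖z‖^{-(d+α)} (2·1_{z₁>0} + 1_{z₁=0})`, `p(0) = 0`. -/
noncomputable def pker (d : ℕ) [NeZero d] (α : ℝ) (z : Fin d → ℤ) : ℝ :=
  if z = 0 then 0
  else znorm d z ^ (-((d : ℝ) + α)) *
    ((if 0 < z 0 then (2 : ℝ) else 0) + (if z 0 = 0 then 1 else 0))

open Filter MeasureTheory Metric Finset
open scoped ENNReal

namespace St1
variable {d : ℕ}

/-- integer squared norm -/
def Qz (z : Fin d → ℤ) : ℤ := ∑ i, (z i)^2

lemma Qz_nonneg (z : Fin d → ℤ) : 0 ≤ Qz z :=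
  Finset.sum_nonneg fun i _ => sq_nonneg _

lemma Qz_eq_zero_iff (z : Fin d → ℤ) : Qz z = 0 ↔ z = 0 := by
  constructor
  · intro h
    funext i
    have := (Finset.sum_eq_zero_iff_of_nonneg (fun i _ => sq_nonneg (z i))).1 h i (Finset.mem_univ i)
    exact pow_eq_zero_iff (by norm_num) |>.1 this
  · rintro rfl; simp [Qz]

lemma znorm_eq (z : Fin d → ℤ) : znorm d z = Real.sqrt ((Qz z : ℝ)) := by
  unfold znorm Qz
  push_cast
  rfl

lemma sq_coord_le_Qz (z : Fin d → ℤ) (i : Fin d) : (z i)^2 ≤ Qz z :=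
  Finset.single_le_sum (fun i _ => sq_nonneg (z i)) (Finset.mem_univ i)

/-- the lattice points with `0 < Qz z ≤ k` -/
noncomputable def Λ (d k : ℕ) : Finset (Fin d → ℤ) :=
  (Fintype.piFinset fun _ : Fin d => Finset.Icc (-(k:ℤ)) k).filter
    (fun z => 0 < Qz z ∧ Qz z ≤ (k:ℤ))

lemma mem_Λ {k : ℕ} {z : Fin d → ℤ} : z ∈ Λ d k ↔ 0 < Qz z ∧ Qz z ≤ (k:ℤ) := by
  unfold Λ
  rw [Finset.mem_filter, Fintype.mem_piFinset]
  constructor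
  · tauto
  · rintro ⟨h1, h2⟩
    refine ⟨fun a => ?_, h1, h2⟩
    rw [Finset.mem_Icc]
    have h3 : (z a)^2 ≤ (k:ℤ) := le_trans (sq_coord_le_Qz z a) h2
    have h4 : |z a| ≤ (k:ℤ) := by
      nlinarith [abs_nonneg (z a), sq_abs (z a)]
    exact abs_le.1 h4

lemma znorm_le_iff {k : ℕ} {z : Fin d → ℤ} : znorm d z ≤ (k:ℝ) ↔ Qz z ≤ ((k:ℤ))^2 := by
  rw [znorm_eq]
  rw [show (k:ℝ) = Real.sqrt ((k:ℝ)^2) from (Real.sqrt_sq (by positivity)).symm]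
  rw [Real.sqrt_le_sqrt_iff (by positivity)]
  constructor <;> intro h <;> exact_mod_cast h


lemma Qz_def (z : Fin d → ℤ) : Qz z = ∑ i, (z i)^2 := rfl

lemma zero_not_mem_Λ {k : ℕ} : (0 : Fin d → ℤ) ∉ Λ d k := by
  rw [mem_Λ]
  rintro ⟨h1, -⟩
  rw [show Qz (0 : Fin d → ℤ) = 0 from (Qz_eq_zero_iff 0).2 rfl] at h1
  exact lt_irrefl 0 h1

-- ## Stage 2
abbrev E (d : ℕ) := EuclideanSpace ℝ (Fin d)

noncomputable def ι' (d : ℕ) (z : Fin d → ℤ) : E d :=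
  (WithLp.equiv 2 (Fin d → ℝ)).symm (fun i => (z i : ℝ))

lemma ι'_apply (z : Fin d → ℤ) (i : Fin d) : ι' d z i = (z i : ℝ) := rfl

lemma norm_ι' (z : Fin d → ℤ) : ‖ι' d z‖ = Real.sqrt ((Qz z : ℝ)) := by
  rw [EuclideanSpace.norm_eq]
  congr 1
  unfold Qz
  push_cast
  refine Finset.sum_congr rfl fun i _ => ?_
  rw [ι'_apply, Real.norm_eq_abs, sq_abs]

noncomputable def cube (z : Fin d → ℤ) : Set (E d) :=
  (MeasurableEquiv.toLp 2 (Fin d → ℝ)).symm ⁻¹'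
    (Set.univ.pi fun i => Set.Ico ((z i : ℝ)) (z i + 1))

lemma mem_cube {z : Fin d → ℤ} {x : E d} :
    x ∈ cube z ↔ ∀ i, (z i : ℝ) ≤ x i ∧ x i < z i + 1 := by
  simp [cube, Set.mem_pi, MeasurableEquiv.coe_toLp_symm]

lemma measurableSet_cube (z : Fin d → ℤ) : MeasurableSet (cube z) :=
  (MeasurableEquiv.toLp 2 (Fin d → ℝ)).symm.measurable
    (MeasurableSet.univ_pi fun i => measurableSet_Ico)

lemma volume_cube (z : Fin d → ℤ) : volume (cube z) = 1 := by
  rw [cube, MeasurePreserving.measure_preimage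
    (EuclideanSpace.volume_preserving_symm_measurableEquiv_toLp (Fin d))
    ((MeasurableSet.univ_pi fun i => measurableSet_Ico).nullMeasurableSet)]
  rw [volume_pi_pi]
  simp [Real.volume_Ico]

lemma cube_disjoint {z w : Fin d → ℤ} (h : z ≠ w) : Disjoint (cube z) (cube w) := by
  rw [Set.disjoint_left]
  intro x hx hw
  rw [mem_cube] at hx hw
  apply h
  funext i
  have h1 := (Int.floor_eq_iff (R := ℝ)).2 ⟨(hx i).1, (hx i).2⟩
  have h2 := (Int.floor_eq_iff (R := ℝ)).2 ⟨(hw i).1, (hw i).2⟩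
  rw [← h1, ← h2]

lemma volume_biUnion (F : Finset (Fin d → ℤ)) :
    volume (⋃ z ∈ F, cube z) = F.card := by
  rw [measure_biUnion_finset (fun z _ w _ hzw => cube_disjoint hzw)
    (fun z _ => measurableSet_cube z)]
  simp [volume_cube]

lemma dist_cube {z : Fin d → ℤ} {x : E d} (hx : x ∈ cube z) :
    ‖x - ι' d z‖ ≤ Real.sqrt d := by
  rw [EuclideanSpace.norm_eq]
  rw [show (d:ℝ) = ∑ _i : Fin d, (1:ℝ) by simp]
  apply Real.sqrt_le_sqrt
  apply Finset.sum_le_sum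
  intro i _
  rw [mem_cube] at hx
  have h1 := (hx i).1
  have h2 := (hx i).2
  have : (x - ι' d z) i = x i - (z i : ℝ) := by
    simp [ι'_apply]
  rw [this, Real.norm_eq_abs, sq_abs]
  nlinarith

lemma cube_subset_ball {z : Fin d → ℤ} {r : ℝ} (hz : ‖ι' d z‖ ≤ r) :
    cube z ⊆ closedBall 0 (r + Real.sqrt d) := by
  intro x hx
  rw [mem_closedBall_zero_iff]
  calc ‖x‖ = ‖ι' d z + (x - ι' d z)‖ := by congr 1; abel
    _ ≤ ‖ι' d z‖ + ‖x - ι' d z‖ := norm_add_le _ _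
    _ ≤ r + Real.sqrt d := add_le_add hz (dist_cube hx)

lemma ball_subset_biUnion (k : ℕ) :
    closedBall (0 : E d) (Real.sqrt k - Real.sqrt d) ⊆
      ⋃ z ∈ (Λ d k ∪ {0} : Finset (Fin d → ℤ)), cube z := by
  intro x hx
  rw [mem_closedBall_zero_iff] at hx
  set z : Fin d → ℤ := fun i => ⌊x i⌋ with hz
  have hxz : x ∈ cube z := by
    rw [mem_cube]
    intro i
    exact ⟨Int.floor_le _, Int.lt_floor_add_one _⟩
  have hnz : ‖ι' d z‖ ≤ Real.sqrt k := by
    calc ‖ι' d z‖ = ‖x - (x - ι' d z)‖ := by congr 1; abel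
      _ ≤ ‖x‖ + ‖x - ι' d z‖ := norm_sub_le _ _
      _ ≤ (Real.sqrt k - Real.sqrt d) + Real.sqrt d := add_le_add hx (dist_cube hxz)
      _ = Real.sqrt k := by ring
  have hQ : Qz z ≤ (k : ℤ) := by
    rw [norm_ι'] at hnz
    have := Real.sqrt_le_sqrt_iff (x := (Qz z : ℝ)) (y := (k:ℝ)) (by positivity) |>.1 ?_
    · exact_mod_cast this
    · exact hnz
  rw [Set.mem_iUnion₂]
  by_cases h0 : z = 0
  · exact ⟨0, by simp [Finset.mem_union], h0 ▸ hxz⟩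
  · refine ⟨z, ?_, hxz⟩
    rw [Finset.mem_union]
    left
    rw [mem_Λ]
    refine ⟨?_, hQ⟩
    rcases lt_or_eq_of_le (Qz_nonneg z) with h | h
    · exact h
    · exact absurd ((Qz_eq_zero_iff z).1 h.symm) h0


lemma volume_biUnion' (F : Finset (Fin d → ℤ)) :
    volume (⋃ z ∈ F, cube z) = F.card := volume_biUnion F

lemma biUnion_subset_ball' (k : ℕ) :
    (⋃ z ∈ (Λ d k ∪ {0} : Finset (Fin d → ℤ)), cube z) ⊆
      closedBall (0 : E d) (Real.sqrt k + Real.sqrt d) := by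
  intro x hx
  rw [Set.mem_iUnion₂] at hx
  obtain ⟨z, hz, hxz⟩ := hx
  have hnorm : ‖ι' d z‖ ≤ Real.sqrt k := by
    rcases Finset.mem_union.1 hz with h | h
    · rw [norm_ι']
      rw [mem_Λ] at h
      have h2 : (Qz z : ℝ) ≤ (k:ℝ) := by exact_mod_cast h.2
      exact Real.sqrt_le_sqrt h2
    · rw [Finset.mem_singleton] at h
      subst h
      rw [norm_ι', show Qz (0 : Fin d → ℤ) = 0 from (Qz_eq_zero_iff 0).2 rfl]
      simpa using Real.sqrt_nonneg (k:ℝ)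
  exact cube_subset_ball hnorm hxz

lemma ball_subset_biUnion' (k : ℕ) :
    closedBall (0 : E d) (Real.sqrt k - Real.sqrt d) ⊆
      ⋃ z ∈ (Λ d k ∪ {0} : Finset (Fin d → ℤ)), cube z := ball_subset_biUnion k

noncomputable def ω (d : ℕ) : ℝ := (volume (ball (0 : E d) 1)).toReal

lemma ω_nonneg : 0 ≤ ω d := ENNReal.toReal_nonneg

lemma volume_closedBall' {r : ℝ} (hr : 0 ≤ r) :
    volume (closedBall (0 : E d) r) = ENNReal.ofReal (r ^ d) * volume (ball (0 : E d) 1) := by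
  rw [Measure.addHaar_closedBall _ _ hr, finrank_euclideanSpace_fin]

lemma toReal_volume_closedBall {r : ℝ} (hr : 0 ≤ r) :
    (volume (closedBall (0 : E d) r)).toReal = ω d * r ^ d := by
  rw [volume_closedBall' hr, ENNReal.toReal_mul, ENNReal.toReal_ofReal (by positivity)]
  rw [mul_comm]; rfl

/-- upper bound: `card (Λ d k) + 1 ≤ ω (√k + √d)^d` -/
lemma countR_upper (k : ℕ) : ((Λ d k).card : ℝ) + 1 ≤ ω d * (Real.sqrt k + Real.sqrt d) ^ d := by
  have h1 : (((Λ d k ∪ {0} : Finset (Fin d → ℤ)).card : ℝ≥0∞)) ≤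
      volume (closedBall (0 : E d) (Real.sqrt k + Real.sqrt d)) := by
    rw [← volume_biUnion' (Λ d k ∪ {0})]
    exact measure_mono (biUnion_subset_ball' k)
  have hfin : volume (closedBall (0 : E d) (Real.sqrt k + Real.sqrt d)) ≠ ⊤ :=
    measure_closedBall_lt_top.ne
  have h2 := ENNReal.toReal_mono hfin h1
  rw [ENNReal.toReal_natCast, toReal_volume_closedBall (by positivity)] at h2
  have h3 : ((Λ d k).card : ℝ) + 1 ≤ ((Λ d k ∪ {0} : Finset (Fin d → ℤ)).card : ℝ) := by
    have : (Λ d k ∪ ({0} : Finset (Fin d → ℤ))).card = (Λ d k).card + 1 := by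
      rw [Finset.card_union_of_disjoint (by simp [zero_not_mem_Λ])]
      rfl
    rw [this]
    push_cast
    exact le_refl _
  linarith

lemma countR_lower (k : ℕ) (hk : 0 ≤ Real.sqrt k - Real.sqrt d) :
    ω d * (Real.sqrt k - Real.sqrt d) ^ d ≤ ((Λ d k).card : ℝ) + 1 := by
  have h1 : volume (closedBall (0 : E d) (Real.sqrt k - Real.sqrt d)) ≤
      (((Λ d k ∪ {0} : Finset (Fin d → ℤ)).card : ℝ≥0∞)) := by
    rw [← volume_biUnion' (Λ d k ∪ {0})]
    exact measure_mono (ball_subset_biUnion' k)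
  have h2 := ENNReal.toReal_mono (by simp) h1
  rw [ENNReal.toReal_natCast, toReal_volume_closedBall hk] at h2
  have h3 : ((Λ d k ∪ {0} : Finset (Fin d → ℤ)).card : ℝ) ≤ ((Λ d k).card : ℝ) + 1 := by
    have := Finset.card_union_le (Λ d k) ({0} : Finset (Fin d → ℤ))
    have h4 : ({0} : Finset (Fin d → ℤ)).card = 1 := rfl
    exact_mod_cast h4 ▸ this
  linarith

lemma pow_add_le_succ (a b : ℝ) (ha : 0 ≤ a) (hb : 0 ≤ b) (n : ℕ) :
    (a+b)^(n+1) ≤ a^(n+1) + (n+1)*b*(a+b)^n := by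
  induction n with
  | zero => simp
  | succ n ih =>
    have hab : 0 ≤ a + b := by linarith
    have h1 : a^(n+1) ≤ (a+b)^(n+1) := pow_le_pow_left₀ ha (by linarith) _
    have h2 : (a+b)^(n+2) = (a+b)^(n+1) * (a+b) := by ring
    have h3 : (a+b)^(n+1) * (a+b) ≤ (a^(n+1) + (n+1)*b*(a+b)^n) * (a+b) := by
      apply mul_le_mul_of_nonneg_right ih hab
    have h4 : 0 ≤ (a+b)^n := pow_nonneg hab n
    have h5 : 0 ≤ (a+b)^(n+1) := pow_nonneg hab _
    calc (a+b)^(n+2) = (a+b)^(n+1) * (a+b) := h2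
      _ ≤ (a^(n+1) + (n+1)*b*(a+b)^n) * (a+b) := h3
      _ = a^(n+2) + a^(n+1)*b + (n+1)*b*((a+b)^n*(a+b)) := by ring
      _ = a^(n+2) + a^(n+1)*b + (n+1)*b*(a+b)^(n+1) := by ring
      _ ≤ a^(n+2) + (a+b)^(n+1)*b + (n+1)*b*(a+b)^(n+1) := by nlinarith
      _ = a^(n+2) + (n+1+1)*b*(a+b)^(n+1) := by ring
      _ = a^(n+2) + (↑(n+1)+1)*b*(a+b)^(n+1) := by push_cast; ring

lemma sqrt_pow_eq_rpow (x : ℝ) (hx : 0 ≤ x) (n : ℕ) :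
    (Real.sqrt x)^n = x ^ ((n:ℝ)/2) := by
  rw [Real.sqrt_eq_rpow, ← Real.rpow_natCast (x ^ (1/2 : ℝ)) n, ← Real.rpow_mul hx]
  ring_nf

lemma one_sub_exp_le (x : ℝ) : 1 - Real.exp (-x) ≤ x := by
  have := Real.add_one_le_exp (-x)
  linarith

lemma le_one_sub_exp {x : ℝ} (hx : 0 ≤ x) : x - x^2 ≤ 1 - Real.exp (-x) := by
  have h1 : 1 + x ≤ Real.exp x := by linarith [Real.add_one_le_exp x]
  have h2 : Real.exp (-x) = (Real.exp x)⁻¹ := Real.exp_neg x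
  have h3 : 0 < Real.exp x := Real.exp_pos x
  have h4 : Real.exp (-x) ≤ (1+x)⁻¹ := by
    rw [h2]
    apply inv_anti₀ (by linarith) h1
  have h5 : (1+x)⁻¹ ≤ 1 - x + x^2 := by
    rw [inv_le_iff_one_le_mul₀ (by linarith)]
    nlinarith
  linarith

lemma log_succ_sub_le {k : ℕ} (hk : 1 ≤ k) :
    Real.log (k+1) - Real.log k ≤ 1/(k:ℝ) := by
  have hk0 : (0:ℝ) < k := by exact_mod_cast hk
  have h1 : Real.log (k+1) - Real.log k = Real.log ((k+1)/k) := by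
    rw [Real.log_div (by positivity) (by positivity)]
  rw [h1]
  have := Real.log_le_sub_one_of_pos (x := ((k:ℝ)+1)/k) (by positivity)
  have h2 : ((k:ℝ)+1)/k - 1 = 1/k := by field_simp; ring
  linarith

lemma log_succ_sub_nonneg {k : ℕ} (hk : 1 ≤ k) :
    0 ≤ Real.log (k+1) - Real.log k := by
  have hk0 : (0:ℝ) < k := by exact_mod_cast hk
  have := Real.log_le_log (by positivity) (show (k:ℝ) ≤ k+1 by linarith)
  linarith

lemma rpow_mul_delta {k : ℕ} (hk : 1 ≤ k) (β : ℝ) :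
    (k:ℝ)^(β:ℝ) * ((k:ℝ)^(-β) - ((k:ℝ)+1)^(-β)) =
      1 - Real.exp (-(β * (Real.log (k+1) - Real.log k))) := by
  have hk0 : (0:ℝ) < k := by exact_mod_cast hk
  have hk1 : (0:ℝ) < (k:ℝ)+1 := by linarith
  rw [Real.rpow_def_of_pos hk0, Real.rpow_def_of_pos hk0, Real.rpow_def_of_pos hk1,
    mul_sub, ← Real.exp_add, ← Real.exp_add]
  rw [show Real.log k * β + Real.log k * -β = 0 by ring, Real.exp_zero]
  ring_nf

lemma delta_nonneg {k : ℕ} (hk : 1 ≤ k) {β : ℝ} (hβ : 0 ≤ β) :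
    0 ≤ (k:ℝ)^(-β) - ((k:ℝ)+1)^(-β) := by
  have hk0 : (0:ℝ) < k := by exact_mod_cast hk
  have h1 : (k:ℝ)^β ≤ ((k:ℝ)+1)^β := Real.rpow_le_rpow (le_of_lt hk0) (by linarith) hβ
  have h2 : ((k:ℝ)+1)^(-β) ≤ (k:ℝ)^(-β) := by
    rw [Real.rpow_neg (by linarith), Real.rpow_neg (le_of_lt hk0)]
    exact inv_anti₀ (Real.rpow_pos_of_pos hk0 β) h1
  linarith

-- telescoping
lemma telescope (g : ℕ → ℝ) {q M : ℕ} (hqM : q ≤ M) :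
    g q = g (M+1) + ∑ k ∈ Icc q M, (g k - g (k+1)) := by
  induction M, hqM using Nat.le_induction with
  | base => rw [Finset.Icc_self, Finset.sum_singleton]; ring
  | succ M hqM ih =>
    rw [Finset.sum_Icc_succ_top (by omega)]
    linarith

lemma filter_Λ {k M : ℕ} (hk : k ≤ M) :
    (Λ d M).filter (fun z => Qz z ≤ (k:ℤ)) = Λ d k := by
  ext z
  rw [Finset.mem_filter, mem_Λ, mem_Λ]
  constructor
  · rintro ⟨⟨h1, _⟩, h3⟩; exact ⟨h1, h3⟩
  · rintro ⟨h1, h2⟩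
    exact ⟨⟨h1, le_trans h2 (by exact_mod_cast hk)⟩, h2⟩

lemma abel (M : ℕ) (g : ℕ → ℝ) :
    ∑ z ∈ Λ d M, g ((Qz z).toNat) =
      (∑ k ∈ Icc 1 M, ((Λ d k).card : ℝ) * (g k - g (k+1))) + ((Λ d M).card : ℝ) * g (M+1) := by
  classical
  have step1 : ∀ z ∈ Λ d M, g ((Qz z).toNat) =
      g (M+1) + ∑ k ∈ Icc 1 M, (if Qz z ≤ (k:ℤ) then g k - g (k+1) else 0) := by
    intro z hz
    rw [mem_Λ] at hz
    have hq1 : 1 ≤ (Qz z).toNat := by omega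
    have hqM : (Qz z).toNat ≤ M := by omega
    rw [Finset.sum_ite, Finset.sum_const_zero, add_zero]
    have hfil : (Icc 1 M : Finset ℕ).filter (fun k : ℕ => Qz z ≤ (k:ℤ)) = (Icc ((Qz z).toNat) M : Finset ℕ) := by
      ext k
      rw [Finset.mem_filter, Finset.mem_Icc, Finset.mem_Icc]
      constructor
      · rintro ⟨⟨_, h2⟩, h3⟩
        refine ⟨?_, h2⟩
        omega
      · rintro ⟨h1, h2⟩
        refine ⟨⟨by omega, h2⟩, by omega⟩
    rw [hfil]
    exact telescope g hqM
  rw [Finset.sum_congr rfl step1, Finset.sum_add_distrib, Finset.sum_const, Finset.sum_comm]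
  have inner : ∀ k ∈ Icc 1 M, (∑ z ∈ Λ d M, if Qz z ≤ (k:ℤ) then g k - g (k+1) else 0)
      = ((Λ d k).card : ℝ) * (g k - g (k+1)) := by
    intro k hk
    rw [Finset.mem_Icc] at hk
    rw [Finset.sum_ite, Finset.sum_const_zero, add_zero, Finset.sum_const, filter_Λ hk.2]
    simp [nsmul_eq_mul]
  rw [Finset.sum_congr rfl inner]
  simp [nsmul_eq_mul]
  ring


lemma one_le_rpow_aux {k : ℕ} (hk : 1 ≤ k) {y : ℝ} (hy : 0 ≤ y) : 1 ≤ (k:ℝ)^(y:ℝ) := by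
  have hk1 : (1:ℝ) ≤ k := by exact_mod_cast hk
  have := Real.rpow_le_rpow_of_exponent_le hk1 hy
  rwa [Real.rpow_zero] at this

lemma A_upper (hd : 1 ≤ d) (k : ℕ) (hk : 1 ≤ k) :
    ((Λ d k).card : ℝ) - ω d * (k:ℝ)^((d:ℝ)/2) ≤
      (ω d * (d * Real.sqrt d * 2^(d-1)) + ω d * (2*Real.sqrt d)^d) * (k:ℝ)^((d:ℝ)/2 - 1/2) := by
  set s := Real.sqrt k with hs
  set t := Real.sqrt d with ht
  have hs0 : 0 ≤ s := Real.sqrt_nonneg _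
  have ht0 : 0 ≤ t := Real.sqrt_nonneg _
  have hrp1 : (1:ℝ) ≤ (k:ℝ)^((d:ℝ)/2 - 1/2) :=
    one_le_rpow_aux hk (by
      have : (1:ℝ) ≤ (d:ℝ) := by exact_mod_cast hd
      linarith)
  have hkey := countR_upper (d:=d) k
  have hsd : s^d = (k:ℝ)^((d:ℝ)/2) := sqrt_pow_eq_rpow _ (by positivity) d
  rcases le_or_gt (d:ℝ) (k:ℝ) with hdk | hdk
  · -- t ≤ s
    have hts : t ≤ s := Real.sqrt_le_sqrt hdk
    have hpow : (s+t)^d ≤ s^d + d*t*(s+t)^(d-1) := by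
      have := pow_add_le_succ s t hs0 ht0 (d-1)
      have hd1 : d - 1 + 1 = d := by omega
      rw [hd1] at this
      calc (s+t)^d ≤ s^d + (↑(d-1)+1)*t*(s+t)^(d-1) := this
        _ ≤ s^d + d*t*(s+t)^(d-1) := by
            have : ((d-1:ℕ):ℝ) + 1 = (d:ℝ) := by
              have : ((d-1:ℕ):ℝ) = (d:ℝ) - 1 := by
                push_cast [Nat.cast_sub hd]; ring
              linarith
            rw [this]
    have h2s : (s+t)^(d-1) ≤ 2^(d-1) * s^(d-1) := by
      calc (s+t)^(d-1) ≤ (2*s)^(d-1) := pow_le_pow_left₀ (by positivity) (by linarith) _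
        _ = 2^(d-1) * s^(d-1) := mul_pow 2 s (d-1)
    have hs1 : s^(d-1) = (k:ℝ)^((d:ℝ)/2 - 1/2) := by
      rw [sqrt_pow_eq_rpow _ (by positivity) (d-1)]
      congr 1
      push_cast [Nat.cast_sub hd]
      ring
    have hω := ω_nonneg (d := d)
    have : ((Λ d k).card : ℝ) ≤ ω d * (s^d + d*t*(2^(d-1) * s^(d-1))) := by
      nlinarith [mul_le_mul_of_nonneg_left hpow hω,
        mul_le_mul_of_nonneg_left h2s (mul_nonneg (mul_nonneg (Nat.cast_nonneg d) ht0) hω)]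
    rw [hsd, hs1] at this
    nlinarith [mul_nonneg (mul_nonneg hω (mul_nonneg (mul_nonneg (Nat.cast_nonneg d) ht0) (by positivity : (0:ℝ) ≤ (2:ℝ)^(d-1)))) (le_trans zero_le_one hrp1),
      mul_nonneg (mul_nonneg hω (by positivity : (0:ℝ) ≤ (2*t)^d)) (le_trans zero_le_one hrp1)]
  · -- k < d : crude bound
    have hst : s ≤ t := Real.sqrt_le_sqrt (le_of_lt hdk)
    have hω := ω_nonneg (d := d)
    have hcrude : ((Λ d k).card : ℝ) ≤ ω d * (2*t)^d := by
      have : (s+t)^d ≤ (2*t)^d := pow_le_pow_left₀ (by positivity) (by linarith) _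
      nlinarith [mul_le_mul_of_nonneg_left this hω]
    have hrpos : 0 ≤ ω d * (k:ℝ)^((d:ℝ)/2) :=
      mul_nonneg hω (Real.rpow_nonneg (by positivity) _)
    have h1 : ω d * (2*t)^d ≤ ω d * (2*t)^d * (k:ℝ)^((d:ℝ)/2 - 1/2) := by
      nlinarith [mul_nonneg hω (by positivity : (0:ℝ) ≤ (2*t)^d)]
    nlinarith [mul_nonneg (mul_nonneg hω (mul_nonneg (mul_nonneg (Nat.cast_nonneg d) ht0) (by positivity : (0:ℝ) ≤ (2:ℝ)^(d-1)))) (le_trans zero_le_one hrp1)]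

lemma A_lower (hd : 1 ≤ d) (k : ℕ) (hk : 1 ≤ k) :
    ω d * (k:ℝ)^((d:ℝ)/2) - ((Λ d k).card : ℝ) ≤
      (1 + ω d * (d * Real.sqrt d) + ω d * (d:ℝ)^((d:ℝ)/2)) * (k:ℝ)^((d:ℝ)/2 - 1/2) := by
  set s := Real.sqrt k with hs
  set t := Real.sqrt d with ht
  have hs0 : 0 ≤ s := Real.sqrt_nonneg _
  have ht0 : 0 ≤ t := Real.sqrt_nonneg _
  have hω := ω_nonneg (d := d)
  have hrp1 : (1:ℝ) ≤ (k:ℝ)^((d:ℝ)/2 - 1/2) :=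
    one_le_rpow_aux hk (by
      have : (1:ℝ) ≤ (d:ℝ) := by exact_mod_cast hd
      linarith)
  have hsd : s^d = (k:ℝ)^((d:ℝ)/2) := sqrt_pow_eq_rpow _ (by positivity) d
  have hs1 : s^(d-1) = (k:ℝ)^((d:ℝ)/2 - 1/2) := by
    rw [sqrt_pow_eq_rpow _ (by positivity) (d-1)]
    congr 1
    push_cast [Nat.cast_sub hd]
    ring
  rcases le_or_gt (d:ℝ) (k:ℝ) with hdk | hdk
  · have hts : t ≤ s := Real.sqrt_le_sqrt hdk
    have hlow := countR_lower (d:=d) k (by linarith)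
    -- s^d ≤ (s-t)^d + d * t * s^(d-1)
    have hpow : s^d ≤ (s-t)^d + d*t*s^(d-1) := by
      have := pow_add_le_succ (s-t) t (by linarith) ht0 (d-1)
      have hd1 : d - 1 + 1 = d := by omega
      rw [hd1, show s - t + t = s from by ring] at this
      have hcast : ((d-1:ℕ):ℝ) + 1 = (d:ℝ) := by
        push_cast [Nat.cast_sub hd]; ring
      rw [hcast] at this
      exact this
    have h1 : ω d * s^d ≤ ω d * ((s-t)^d + d*t*s^(d-1)) :=
      mul_le_mul_of_nonneg_left hpow hω
    rw [hsd, hs1] at *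
    nlinarith [mul_nonneg hω (Real.rpow_nonneg (show (0:ℝ) ≤ (d:ℝ) by positivity) ((d:ℝ)/2))]
  · -- k < d
    have hk1 : (1:ℝ) ≤ (k:ℝ) := by exact_mod_cast hk
    have hkd : (k:ℝ)^((d:ℝ)/2) ≤ (d:ℝ)^((d:ℝ)/2) :=
      Real.rpow_le_rpow (by positivity) (le_of_lt hdk) (by positivity)
    have hA : (0:ℝ) ≤ ((Λ d k).card : ℝ) := Nat.cast_nonneg _
    nlinarith [mul_le_mul_of_nonneg_left hkd hω,
      mul_nonneg (mul_nonneg hω (Real.rpow_nonneg (show (0:ℝ) ≤ (d:ℝ) by positivity) ((d:ℝ)/2))) (le_trans zero_le_one hrp1),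
      mul_nonneg (mul_nonneg hω (mul_nonneg (Nat.cast_nonneg d) ht0)) (le_trans zero_le_one hrp1)]

lemma A_abs (hd : 1 ≤ d) : ∃ C₁ : ℝ, 0 ≤ C₁ ∧ ∀ k : ℕ, 1 ≤ k →
    |((Λ d k).card : ℝ) - ω d * (k:ℝ)^((d:ℝ)/2)| ≤ C₁ * (k:ℝ)^((d:ℝ)/2 - 1/2) := by
  refine ⟨(ω d * (d * Real.sqrt d * 2^(d-1)) + ω d * (2*Real.sqrt d)^d) +
    (1 + ω d * (d * Real.sqrt d) + ω d * (d:ℝ)^((d:ℝ)/2)), ?_, ?_⟩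
  · have := ω_nonneg (d := d)
    have h1 : (0:ℝ) ≤ Real.sqrt d := Real.sqrt_nonneg _
    have h2 : (0:ℝ) ≤ (d:ℝ)^((d:ℝ)/2) := Real.rpow_nonneg (by positivity) _
    positivity
  · intro k hk
    have h1 := A_upper hd k hk
    have h2 := A_lower hd k hk
    have hnn : (0:ℝ) ≤ (k:ℝ)^((d:ℝ)/2 - 1/2) := Real.rpow_nonneg (by positivity) _
    have c1nn : (0:ℝ) ≤ ω d * (↑d * Real.sqrt ↑d * 2 ^ (d - 1)) + ω d * (2 * Real.sqrt ↑d) ^ d := by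
      have := ω_nonneg (d := d)
      have h1' : (0:ℝ) ≤ Real.sqrt d := Real.sqrt_nonneg _
      positivity
    have c2nn : (0:ℝ) ≤ 1 + ω d * (↑d * Real.sqrt ↑d) + ω d * (d:ℝ)^((d:ℝ)/2) := by
      have := ω_nonneg (d := d)
      have h1' : (0:ℝ) ≤ Real.sqrt d := Real.sqrt_nonneg _
      have h2' : (0:ℝ) ≤ (d:ℝ)^((d:ℝ)/2) := Real.rpow_nonneg (by positivity) _
      positivity
    rw [abs_le]
    constructor
    · nlinarith [mul_nonneg c1nn hnn]
    · nlinarith [mul_nonneg c2nn hnn]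

lemma rpow_neg_anti {x y b : ℝ} (hx : 0 < x) (hxy : x ≤ y) (hb : 0 ≤ b) :
    y^(-b) ≤ x^(-b) := by
  rw [Real.rpow_neg (by linarith), Real.rpow_neg (le_of_lt hx)]
  exact inv_anti₀ (Real.rpow_pos_of_pos hx b) (Real.rpow_le_rpow (le_of_lt hx) hxy hb)

set_option maxHeartbeats 2000000 in
lemma main_est (hd : 1 ≤ d) : ∃ C : ℝ, ∀ N : ℕ, 2 ≤ N →
    |(∑ z ∈ Λ d (N^2), ((Qz z : ℝ)) ^ (-((d:ℝ)/2))) - ω d * d * Real.log N| ≤ C := by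
  obtain ⟨C₁, hC₁0, hC₁⟩ := A_abs hd
  have hω := ω_nonneg (d := d)
  set β : ℝ := (d:ℝ)/2 with hβdef
  have hd1 : (1:ℝ) ≤ (d:ℝ) := by exact_mod_cast hd
  have hβ0 : 0 < β := by rw [hβdef]; linarith
  have hsummable : Summable (fun n : ℕ => ((n:ℝ)^((3:ℝ)/2))⁻¹) :=
    Real.summable_nat_rpow_inv.2 (by norm_num)
  set Tσ : ℝ := ∑' n : ℕ, ((n:ℝ)^((3:ℝ)/2))⁻¹ with hTdef
  refine ⟨(C₁*β + ω d*β^2)*Tσ + ω d*(1+Real.sqrt d)^d + ω d*β*Real.log 2, ?_⟩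
  intro N hN
  clear_value β Tσ
  set M : ℕ := N^2 with hMdef
  have hM1 : 1 ≤ M := Nat.one_le_pow _ _ (by omega)
  have hMR1 : (1:ℝ) ≤ (M:ℝ) := by exact_mod_cast hM1
  have hMR0 : (0:ℝ) < (M:ℝ) := by linarith
  -- abel rewrite
  have hsum_eq : ∑ z ∈ Λ d M, ((Qz z : ℝ))^(-β) =
      ∑ z ∈ Λ d M, (fun k : ℕ => ((k:ℕ):ℝ)^(-β)) ((Qz z).toNat) := by
    refine Finset.sum_congr rfl fun z hz => ?_
    rw [mem_Λ] at hz
    congr 2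
    rw [Int.toNat_of_nonneg (le_of_lt hz.1)]
  have habel := abel (d := d) M (fun k : ℕ => ((k:ℕ):ℝ)^(-β))
  rw [hsum_eq, habel]
  set δ : ℕ → ℝ := fun k => (k:ℝ)^(-β) - ((k:ℝ)+1)^(-β) with hδdef
  set L : ℕ → ℝ := fun k => Real.log ((k:ℝ)+1) - Real.log (k:ℝ) with hLdef
  clear_value δ L
  -- replace g k - g (k+1) by δ k
  have hgδ : ∀ k : ℕ, (((k:ℕ):ℝ)^(-β) - (((k+1:ℕ)):ℝ)^(-β)) = δ k := by
    intro k
    simp only [hδdef]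
    push_cast
    ring_nf
  have hS1 : (∑ k ∈ Icc 1 M, ((Λ d k).card : ℝ) * (((k:ℕ):ℝ)^(-β) - (((k+1:ℕ)):ℝ)^(-β))) =
      ∑ k ∈ Icc 1 M, ((Λ d k).card : ℝ) * δ k :=
    Finset.sum_congr rfl fun k _ => by rw [hgδ k]
  beta_reduce
  rw [hS1]
  -- key per-k bound
  have KB : ∀ k ∈ Icc 1 M, |((Λ d k).card : ℝ) * δ k - ω d * β * L k| ≤
      (C₁*β + ω d*β^2) * ((k:ℝ)^((3:ℝ)/2))⁻¹ := by
    intro k hkmem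
    rw [Finset.mem_Icc] at hkmem
    have hk : 1 ≤ k := hkmem.1
    have hk0 : (0:ℝ) < (k:ℝ) := by exact_mod_cast hk
    have hk1 : (1:ℝ) ≤ (k:ℝ) := by exact_mod_cast hk
    have hLnn : 0 ≤ L k := by simp only [hLdef]; exact log_succ_sub_nonneg hk
    have hLle : L k ≤ 1/(k:ℝ) := by simp only [hLdef]; exact log_succ_sub_le hk
    have hδnn : 0 ≤ δ k := by simp only [hδdef]; exact delta_nonneg hk (le_of_lt hβ0)
    have hid : (k:ℝ)^(β:ℝ) * δ k = 1 - Real.exp (-(β * L k)) := by simp only [hδdef, hLdef]; exact rpow_mul_delta hk β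
    have hβL : 0 ≤ β * L k := mul_nonneg (le_of_lt hβ0) hLnn
    have h1 : (k:ℝ)^(β:ℝ) * δ k ≤ β * L k := by rw [hid]; exact one_sub_exp_le _
    have h2 : β * L k - (β * L k)^2 ≤ (k:ℝ)^(β:ℝ) * δ k := by
      rw [hid]; exact le_one_sub_exp hβL
    have h3 : |(k:ℝ)^(β:ℝ) * δ k - β * L k| ≤ β^2 * (1/(k:ℝ))^2 := by
      have hL2 : L k^2 ≤ (1/(k:ℝ))^2 := by
        nlinarith [mul_le_mul hLle hLle hLnn (by positivity : (0:ℝ) ≤ 1/(k:ℝ))]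
      have hq : (β * L k)^2 ≤ β^2 * (1/(k:ℝ))^2 := by
        nlinarith [mul_le_mul_of_nonneg_left hL2 (sq_nonneg β)]
      have hqnn : (0:ℝ) ≤ β^2 * (1/(k:ℝ))^2 := by positivity
      rw [abs_le]
      constructor
      · linarith
      · linarith
    have h4 := hC₁ k hk
    have hinv : (k:ℝ)^(-β) * (k:ℝ)^(β:ℝ) = 1 := by
      rw [← Real.rpow_add hk0]; simp
    have h5 : δ k ≤ (k:ℝ)^(-β) * (β * (1/(k:ℝ))) := by
      have e1 : δ k = (k:ℝ)^(-β) * ((k:ℝ)^(β:ℝ) * δ k) := by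
        rw [← mul_assoc, hinv, one_mul]
      rw [e1]
      apply mul_le_mul_of_nonneg_left _ (Real.rpow_nonneg (le_of_lt hk0) _)
      calc (k:ℝ)^(β:ℝ) * δ k ≤ β * L k := h1
        _ ≤ β * (1/(k:ℝ)) := by nlinarith
    have hpowalg : (k:ℝ)^(β-1/2) * ((k:ℝ)^(-β) * (1/(k:ℝ))) = ((k:ℝ)^((3:ℝ)/2))⁻¹ := by
      rw [← Real.rpow_neg (le_of_lt hk0) ((3:ℝ)/2),
        show (1:ℝ)/(k:ℝ) = (k:ℝ)^(-1:ℝ) from by rw [Real.rpow_neg_one, one_div],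
        ← Real.rpow_add hk0, ← Real.rpow_add hk0]
      congr 1
      ring
    have hpowalg2 : ((1:ℝ)/(k:ℝ))^2 ≤ ((k:ℝ)^((3:ℝ)/2))⁻¹ := by
      have e1 : ((1:ℝ)/(k:ℝ))^2 = ((k:ℝ)^((2:ℝ)))⁻¹ := by
        rw [div_pow, one_pow, show ((2:ℝ)) = ((2:ℕ):ℝ) by norm_num, Real.rpow_natCast, one_div]
      rw [e1]
      apply inv_anti₀ (Real.rpow_pos_of_pos hk0 _)
      exact Real.rpow_le_rpow_of_exponent_le hk1 (by norm_num)
    have hsplit : ((Λ d k).card : ℝ) * δ k - ω d * β * L k =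
        (((Λ d k).card : ℝ) - ω d * (k:ℝ)^(β:ℝ)) * δ k + ω d * ((k:ℝ)^(β:ℝ) * δ k - β * L k) := by ring
    rw [hsplit]
    have hstep1 : |(((Λ d k).card : ℝ) - ω d * (k:ℝ)^(β:ℝ)) * δ k| ≤ C₁ * β * ((k:ℝ)^((3:ℝ)/2))⁻¹ := by
      rw [abs_mul, abs_of_nonneg hδnn]
      calc |((Λ d k).card : ℝ) - ω d * (k:ℝ)^(β:ℝ)| * δ k
          ≤ (C₁ * (k:ℝ)^(β - 1/2)) * ((k:ℝ)^(-β) * (β * (1/(k:ℝ)))) :=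
            mul_le_mul h4 h5 hδnn (mul_nonneg hC₁0 (Real.rpow_nonneg (le_of_lt hk0) _))
        _ = C₁ * β * ((k:ℝ)^(β-1/2) * ((k:ℝ)^(-β) * (1/(k:ℝ)))) := by ring
        _ = C₁ * β * ((k:ℝ)^((3:ℝ)/2))⁻¹ := by rw [← hpowalg]; try ring
    have hstep2 : |ω d * ((k:ℝ)^(β:ℝ) * δ k - β * L k)| ≤ ω d * β^2 * ((k:ℝ)^((3:ℝ)/2))⁻¹ := by
      rw [abs_mul, abs_of_nonneg hω]
      calc ω d * |(k:ℝ)^(β:ℝ) * δ k - β * L k| ≤ ω d * (β^2 * (1/(k:ℝ))^2) :=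
            mul_le_mul_of_nonneg_left h3 hω
        _ = (ω d * β^2) * (1/(k:ℝ))^2 := by ring
        _ ≤ (ω d * β^2) * ((k:ℝ)^((3:ℝ)/2))⁻¹ :=
            mul_le_mul_of_nonneg_left hpowalg2 (by positivity)
    calc |(((Λ d k).card : ℝ) - ω d * (k:ℝ)^(β:ℝ)) * δ k + ω d * ((k:ℝ)^(β:ℝ) * δ k - β * L k)|
        ≤ |(((Λ d k).card : ℝ) - ω d * (k:ℝ)^(β:ℝ)) * δ k| + |ω d * ((k:ℝ)^(β:ℝ) * δ k - β * L k)| :=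
          abs_add_le _ _
      _ ≤ C₁ * β * ((k:ℝ)^((3:ℝ)/2))⁻¹ + ω d * β^2 * ((k:ℝ)^((3:ℝ)/2))⁻¹ := by
          linarith
      _ = (C₁*β + ω d*β^2) * ((k:ℝ)^((3:ℝ)/2))⁻¹ := by ring
  -- sum the key bound
  have hTpart : ∑ k ∈ Icc 1 M, ((k:ℝ)^((3:ℝ)/2))⁻¹ ≤ Tσ := by
    rw [hTdef]
    apply hsummable.sum_le_tsum _ (fun i _ => by positivity)
  have hconstnn : 0 ≤ C₁*β + ω d*β^2 := by positivity
  have hsum1 : |∑ k ∈ Icc 1 M, ((Λ d k).card : ℝ) * δ k - ω d * β * ∑ k ∈ Icc 1 M, L k| ≤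
      (C₁*β + ω d*β^2) * Tσ := by
    rw [Finset.mul_sum, ← Finset.sum_sub_distrib]
    calc |∑ k ∈ Icc 1 M, (((Λ d k).card : ℝ) * δ k - ω d * β * L k)|
        ≤ ∑ k ∈ Icc 1 M, |((Λ d k).card : ℝ) * δ k - ω d * β * L k| := Finset.abs_sum_le_sum_abs _ _
      _ ≤ ∑ k ∈ Icc 1 M, (C₁*β + ω d*β^2) * ((k:ℝ)^((3:ℝ)/2))⁻¹ := Finset.sum_le_sum KB
      _ = (C₁*β + ω d*β^2) * ∑ k ∈ Icc 1 M, ((k:ℝ)^((3:ℝ)/2))⁻¹ := by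
          rw [Finset.mul_sum]
      _ ≤ (C₁*β + ω d*β^2) * Tσ := mul_le_mul_of_nonneg_left hTpart hconstnn
  -- telescoping of logs
  have hlog : ∑ k ∈ Icc 1 M, L k = Real.log ((M:ℝ)+1) := by
    have ht := telescope (fun k : ℕ => -Real.log ((k:ℕ):ℝ)) (hqM := hM1)
    have hcongr : ∑ k ∈ Icc 1 M, ((fun k : ℕ => -Real.log ((k:ℕ):ℝ)) k -
        (fun k : ℕ => -Real.log ((k:ℕ):ℝ)) (k+1)) = ∑ k ∈ Icc 1 M, L k := by
      refine Finset.sum_congr rfl fun k _ => ?_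
      simp only [hLdef]
      push_cast
      ring
    rw [hcongr] at ht
    simp only [Nat.cast_one, Real.log_one, neg_zero] at ht
    push_cast at ht
    linarith
  -- boundary term
  have hBnn : 0 ≤ ((Λ d M).card : ℝ) * (((M+1:ℕ)):ℝ)^(-β) := by
    apply mul_nonneg (Nat.cast_nonneg _) (Real.rpow_nonneg (by positivity) _)
  have hBub : ((Λ d M).card : ℝ) * (((M+1:ℕ)):ℝ)^(-β) ≤ ω d * (1+Real.sqrt d)^d := by
    have hsM1 : (1:ℝ) ≤ Real.sqrt M := by
      rw [show (1:ℝ) = Real.sqrt 1 from (Real.sqrt_one).symm]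
      exact Real.sqrt_le_sqrt hMR1
    have hAub : ((Λ d M).card : ℝ) ≤ ω d * ((1+Real.sqrt d) * Real.sqrt M)^d := by
      have h1 := countR_upper (d:=d) M
      have h2 : (Real.sqrt M + Real.sqrt d)^d ≤ ((1+Real.sqrt d) * Real.sqrt M)^d := by
        apply pow_le_pow_left₀ (by positivity)
        nlinarith [Real.sqrt_nonneg (d:ℝ)]
      nlinarith [mul_le_mul_of_nonneg_left h2 hω]
    have hgub : (((M+1:ℕ)):ℝ)^(-β) ≤ (M:ℝ)^(-β) := by
      have : (((M+1:ℕ)):ℝ) = (M:ℝ)+1 := by push_cast; ring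
      rw [this]
      exact rpow_neg_anti hMR0 (by linarith) (le_of_lt hβ0)
    have hMββ : (M:ℝ)^(β:ℝ) * (M:ℝ)^(-β) = 1 := by
      rw [← Real.rpow_add hMR0]; simp
    have hexp : ((1+Real.sqrt d) * Real.sqrt M)^d = (1+Real.sqrt d)^d * (M:ℝ)^(β:ℝ) := by
      rw [mul_pow, sqrt_pow_eq_rpow _ (by positivity) d, hβdef]
    rw [hexp] at hAub
    have hgnn : (0:ℝ) ≤ (((M+1:ℕ)):ℝ)^(-β) := Real.rpow_nonneg (by positivity) _
    have hMnn : (0:ℝ) ≤ (M:ℝ)^(-β) := Real.rpow_nonneg (by positivity) _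
    have hKnn : (0:ℝ) ≤ ω d * (1+Real.sqrt d)^d := by
      have : (0:ℝ) ≤ Real.sqrt d := Real.sqrt_nonneg _
      positivity
    calc ((Λ d M).card : ℝ) * (((M+1:ℕ)):ℝ)^(-β)
        ≤ (ω d * (1+Real.sqrt d)^d * (M:ℝ)^(β:ℝ)) * (M:ℝ)^(-β) := by
          apply mul_le_mul _ hgub hgnn _
          · rw [mul_assoc]; exact hAub
          · have : (0:ℝ) ≤ (M:ℝ)^(β:ℝ) := Real.rpow_nonneg (by positivity) _
            positivity
      _ = ω d * (1+Real.sqrt d)^d * ((M:ℝ)^(β:ℝ) * (M:ℝ)^(-β)) := by ring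
      _ = ω d * (1+Real.sqrt d)^d := by rw [hMββ, mul_one]
  -- log comparison
  have hN1 : (1:ℝ) ≤ (N:ℝ) := by
    have : (2:ℝ) ≤ (N:ℝ) := by exact_mod_cast hN
    linarith
  have hMN : (M:ℝ) = (N:ℝ)^2 := by rw [hMdef]; push_cast; ring
  have hlogM : Real.log (M:ℝ) = 2 * Real.log N := by
    rw [hMN, show ((N:ℝ)^2) = (N:ℝ)^(2:ℕ) from by norm_num, Real.log_pow]
    push_cast; ring
  have hlogcmp : |ω d * β * Real.log ((M:ℝ)+1) - ω d * (d:ℝ) * Real.log N| ≤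
      ω d * β * Real.log 2 := by
    have h1 : Real.log (M:ℝ) ≤ Real.log ((M:ℝ)+1) :=
      Real.log_le_log hMR0 (by linarith)
    have h2 : Real.log ((M:ℝ)+1) ≤ Real.log 2 + Real.log (M:ℝ) := by
      have e1 : Real.log (2*(M:ℝ)) = Real.log 2 + Real.log (M:ℝ) :=
        Real.log_mul (by norm_num) (by linarith)
      have := Real.log_le_log (by linarith : (0:ℝ) < (M:ℝ)+1) (by linarith : (M:ℝ)+1 ≤ 2*(M:ℝ))
      linarith
    have hdβ : (d:ℝ) = 2*β := by rw [hβdef]; ring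
    have hlog2nn : 0 ≤ Real.log 2 := Real.log_nonneg (by norm_num)
    rw [abs_le]
    constructor
    · rw [hdβ]
      nlinarith [mul_nonneg hω (le_of_lt hβ0)]
    · rw [hdβ]
      nlinarith [mul_nonneg hω (le_of_lt hβ0)]
  -- final assembly
  rw [abs_le] at hsum1 hlogcmp ⊢
  rw [hlog] at hsum1
  constructor
  · linarith [hsum1.1, hlogcmp.1, hBnn]
  · linarith [hsum1.2, hlogcmp.2, hBub]

section Sym
variable [NeZero d]

lemma Qz_comp_equiv (z : Fin d → ℤ) (e : Equiv.Perm (Fin d)) : Qz (z ∘ e) = Qz z := by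
  rw [Qz_def, Qz_def]
  exact Equiv.sum_comp e (fun t => (z t)^2)

lemma Qz_neg_coord (z : Fin d → ℤ) (k : Fin d) :
    Qz (Function.update z k (-(z k))) = Qz z := by
  rw [Qz_def, Qz_def]
  refine Finset.sum_congr rfl fun t _ => ?_
  by_cases h : t = k
  · subst h; simp
  · rw [Function.update_of_ne h]

lemma Qz_neg (z : Fin d → ℤ) : Qz (-z) = Qz z := by
  rw [Qz_def, Qz_def]
  refine Finset.sum_congr rfl fun t _ => ?_
  simp [neg_pow]

/-- the tsum reduces to the finite sum over `Λ d (N^2)` -/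
lemma tsum_red (i j : Fin d) (N : ℕ) :
    (∑' z : Fin d → ℤ,
      (if z ≠ 0 ∧ znorm d z ≤ (N : ℝ) then (z i : ℝ) * (z j : ℝ) * pker d 2 z else 0)) =
    ∑ z ∈ Λ d (N^2), (z i : ℝ) * (z j : ℝ) * pker d 2 z := by
  classical
  rw [tsum_eq_sum (s := Λ d (N^2)) ?h]
  · refine Finset.sum_congr rfl fun z hz => ?_
    rw [mem_Λ] at hz
    rw [if_pos]
    constructor
    · intro h0
      rw [← Qz_eq_zero_iff] at h0
      omega
    · rw [znorm_le_iff]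
      calc Qz z ≤ ((N^2 : ℕ) : ℤ) := hz.2
        _ = ((N:ℤ))^2 := by push_cast; ring
  · intro z hz
    rw [if_neg]
    rintro ⟨h0, hle⟩
    apply hz
    rw [mem_Λ]
    constructor
    · rcases lt_or_eq_of_le (Qz_nonneg z) with h | h
      · exact h
      · exact absurd ((Qz_eq_zero_iff z).1 h.symm) h0
    · rw [znorm_le_iff] at hle
      calc Qz z ≤ ((N:ℤ))^2 := hle
        _ = ((N^2 : ℕ) : ℤ) := by push_cast; ring

/-- off-diagonal: finite sum vanishes -/
lemma offdiag (i j : Fin d) (hij : i ≠ j) (N : ℕ) :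
    ∑ z ∈ Λ d (N^2), (z i : ℝ) * (z j : ℝ) * pker d 2 z = 0 := by
  classical
  have hex : ∃ k : Fin d, k ≠ 0 ∧ ((k = i ∧ j ≠ k) ∨ (k = j ∧ i ≠ k)) := by
    by_cases hj0 : j = 0
    · exact ⟨i, fun h => hij (h.trans hj0.symm), Or.inl ⟨rfl, Ne.symm hij⟩⟩
    · exact ⟨j, hj0, Or.inr ⟨rfl, hij⟩⟩
  obtain ⟨k, hk0, hkij⟩ := hex
  set σ : (Fin d → ℤ) → (Fin d → ℤ) := fun z => Function.update z k (-(z k)) with hσ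
  have hσσ : ∀ z, σ (σ z) = z := by
    intro z
    funext t
    by_cases h : t = k
    · subst h; simp [hσ]
    · simp [hσ, Function.update_of_ne h]
  have hQσ : ∀ z, Qz (σ z) = Qz z := fun z => Qz_neg_coord z k
  have hznormσ : ∀ z, znorm d (σ z) = znorm d z := by
    intro z; rw [znorm_eq, znorm_eq, hQσ]
  have hmem : ∀ z, z ∈ Λ d (N^2) → σ z ∈ Λ d (N^2) := by
    intro z hz; rw [mem_Λ] at hz ⊢; rw [hQσ]; exact hz
  have hzero : ∀ z, z ≠ 0 → σ z ≠ 0 := by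
    intro z h0 hc
    apply h0
    rw [← Qz_eq_zero_iff, ← hQσ, Qz_eq_zero_iff]
    exact hc
  have hz0 : ∀ z, σ z 0 = z 0 := by
    intro z
    exact Function.update_of_ne (by exact fun h => hk0 h.symm) _ _
  have hpker : ∀ z, pker d 2 (σ z) = pker d 2 z := by
    intro z
    unfold pker
    by_cases h0 : z = 0
    · subst h0
      rw [if_pos, if_pos rfl]
      funext t
      by_cases h : t = k <;> simp [hσ, h]
    · rw [if_neg (hzero z h0), if_neg h0, hznormσ, hz0]
  have hterm : ∀ z, ((σ z) i : ℝ) * ((σ z) j : ℝ) = -((z i : ℝ) * (z j : ℝ)) := by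
    intro z
    rcases hkij with ⟨hki, hjk⟩ | ⟨hkj, hik⟩
    · subst hki
      rw [show σ z k = -(z k) from by simp [hσ]]
      rw [show σ z j = z j from Function.update_of_ne hjk _ _]
      push_cast; ring
    · subst hkj
      rw [show σ z k = -(z k) from by simp [hσ]]
      rw [show σ z i = z i from Function.update_of_ne hik _ _]
      push_cast; ring
  have hbij : ∑ z ∈ Λ d (N^2), (z i : ℝ) * (z j : ℝ) * pker d 2 z =
      ∑ z ∈ Λ d (N^2), ((σ z) i : ℝ) * ((σ z) j : ℝ) * pker d 2 (σ z) := by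
    apply Finset.sum_nbij' σ σ hmem hmem
      (fun z _ => hσσ z) (fun z _ => hσσ z)
    intro z hz
    rw [hσσ z]
  have : ∑ z ∈ Λ d (N^2), (z i : ℝ) * (z j : ℝ) * pker d 2 z =
      - ∑ z ∈ Λ d (N^2), (z i : ℝ) * (z j : ℝ) * pker d 2 z := by
    nth_rewrite 1 [hbij]
    rw [← Finset.sum_neg_distrib]
    refine Finset.sum_congr rfl fun z _ => ?_
    rw [hterm, hpker]
    ring
  linarith


/-- diagonal: finite sum equals `(∑ (Qz z)^(-d/2)) / d` -/
lemma diag (i : Fin d) (N : ℕ) :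
    ∑ z ∈ Λ d (N^2), (z i : ℝ) * (z i : ℝ) * pker d 2 z =
      (∑ z ∈ Λ d (N^2), ((Qz z : ℝ)) ^ (-((d:ℝ)/2))) / d := by
  classical
  set u : (Fin d → ℤ) → ℝ := fun z => znorm d z ^ (-((d:ℝ) + 2)) with hu
  -- Step A : weight removal
  have hznorm_neg : ∀ z : Fin d → ℤ, znorm d (-z) = znorm d z := by
    intro z; rw [znorm_eq, znorm_eq, Qz_neg]
  have hnegmem : ∀ z, z ∈ Λ d (N^2) → -z ∈ Λ d (N^2) := by
    intro z hz; rw [mem_Λ] at hz ⊢; rw [Qz_neg]; exact hz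
  have hpk : ∀ z : Fin d → ℤ, z ≠ 0 → pker d 2 z + pker d 2 (-z) = 2 * u z := by
    intro z hz0
    have hneg0 : (-z : Fin d → ℤ) ≠ 0 := fun hc => hz0 (by
      funext t; have := congrFun hc t; simpa [Pi.neg_apply, neg_eq_zero] using this)
    unfold pker
    rw [if_neg hz0, if_neg hneg0, hznorm_neg]
    simp only [Pi.neg_apply]
    rcases lt_trichotomy (z 0) 0 with h | h | h
    · rw [if_neg (show ¬(0 < z 0) by omega), if_neg (show ¬(z 0 = 0) by omega),
        if_pos (show 0 < -z 0 by omega), if_neg (show ¬(-z 0 = 0) by omega)]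
      rw [hu]; ring
    · rw [if_neg (show ¬(0 < z 0) by omega), if_pos (show z 0 = 0 by omega),
        if_neg (show ¬(0 < -z 0) by omega), if_pos (show -z 0 = 0 by omega)]
      rw [hu]; ring
    · rw [if_pos (show 0 < z 0 by omega), if_neg (show ¬(z 0 = 0) by omega),
        if_neg (show ¬(0 < -z 0) by omega), if_neg (show ¬(-z 0 = 0) by omega)]
      rw [hu]; ring
  have hbijneg : ∑ z ∈ Λ d (N^2), (z i : ℝ) * (z i : ℝ) * pker d 2 z =
      ∑ z ∈ Λ d (N^2), ((-z) i : ℝ) * ((-z) i : ℝ) * pker d 2 (-z) := by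
    apply Finset.sum_nbij' (fun z => -z) (fun z => -z) hnegmem hnegmem
      (fun z _ => neg_neg z) (fun z _ => neg_neg z)
    intro z hz
    rw [neg_neg]
  have hstepA : ∑ z ∈ Λ d (N^2), (z i : ℝ) * (z i : ℝ) * pker d 2 z =
      ∑ z ∈ Λ d (N^2), (z i : ℝ)^2 * u z := by
    have h2 : (2:ℝ) * ∑ z ∈ Λ d (N^2), (z i : ℝ) * (z i : ℝ) * pker d 2 z =
        ∑ z ∈ Λ d (N^2), 2 * ((z i : ℝ)^2 * u z) := by
      rw [two_mul]
      nth_rewrite 2 [hbijneg]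
      rw [← Finset.sum_add_distrib]
      refine Finset.sum_congr rfl fun z hz => ?_
      have hz0 : z ≠ 0 := by
        rw [mem_Λ] at hz
        intro hc
        rw [← Qz_eq_zero_iff] at hc
        omega
      have := hpk z hz0
      have hni : ((-z) i : ℝ) = -((z i : ℝ)) := by push_cast [Pi.neg_apply]; ring
      rw [hni]
      nlinarith [this]
    rw [← Finset.mul_sum] at h2
    linarith
  -- Step B : exchange of coordinates
  have hstepB : ∀ i' : Fin d, ∑ z ∈ Λ d (N^2), (z i' : ℝ)^2 * u z =
      ∑ z ∈ Λ d (N^2), (z i : ℝ)^2 * u z := by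
    intro i'
    set e := Equiv.swap i i' with he
    have hQe : ∀ z : Fin d → ℤ, Qz (z ∘ e) = Qz z := fun z => Qz_comp_equiv z e
    have hmeme : ∀ z, z ∈ Λ d (N^2) → z ∘ e ∈ Λ d (N^2) := by
      intro z hz; rw [mem_Λ] at hz ⊢; rw [hQe]; exact hz
    have hinv : ∀ z : Fin d → ℤ, (z ∘ e) ∘ e = z := by
      intro z; funext t
      simp [he, Function.comp, Equiv.swap_apply_self]
    have hue : ∀ z, u (z ∘ e) = u z := by
      intro z; rw [hu]
      simp only
      rw [znorm_eq, znorm_eq, hQe]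
    have := Finset.sum_nbij' (i := fun z : Fin d → ℤ => z ∘ e) (j := fun z => z ∘ e)
      (s := Λ d (N^2)) (t := Λ d (N^2))
      (f := fun z => (z i : ℝ)^2 * u z) (g := fun z => (z i' : ℝ)^2 * u z)
      hmeme hmeme (fun z _ => hinv z) (fun z _ => hinv z) ?_
    · rw [this]
    · intro z hz
      have h2 : e i' = i := by rw [he]; exact Equiv.swap_apply_right i i'
      show (z i : ℝ)^2 * u z = ((z ∘ e) i' : ℝ)^2 * u (z ∘ e)
      rw [hue z]
      have : z (e i') = z i := by rw [h2]
      show ((z i : ℤ) : ℝ)^2 * u z = ((z (e i') : ℤ) : ℝ)^2 * u z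
      rw [this]
  -- Step C : summing over coordinates
  have hstepC : (d:ℝ) * ∑ z ∈ Λ d (N^2), (z i : ℝ)^2 * u z =
      ∑ z ∈ Λ d (N^2), (Qz z : ℝ) * u z := by
    have h1 : ∑ i' : Fin d, ∑ z ∈ Λ d (N^2), (z i' : ℝ)^2 * u z =
        (d:ℝ) * ∑ z ∈ Λ d (N^2), (z i : ℝ)^2 * u z := by
      rw [Finset.sum_congr rfl (fun i' _ => hstepB i')]
      rw [Finset.sum_const, Finset.card_univ, Fintype.card_fin, nsmul_eq_mul]
    rw [← h1, Finset.sum_comm]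
    refine Finset.sum_congr rfl fun z hz => ?_
    rw [← Finset.sum_mul]
    congr 1
    rw [Qz_def]
    push_cast
    rfl
  -- Step D : rpow algebra
  have hstepD : ∀ z ∈ Λ d (N^2), (Qz z : ℝ) * u z = ((Qz z : ℝ)) ^ (-((d:ℝ)/2)) := by
    intro z hz
    rw [mem_Λ] at hz
    have hq0 : (0:ℝ) < (Qz z : ℝ) := by exact_mod_cast hz.1
    have key : (Qz z : ℝ) * znorm d z ^ (-((d:ℝ) + 2)) = ((Qz z : ℝ)) ^ (-((d:ℝ)/2)) := by
      rw [znorm_eq, Real.sqrt_eq_rpow, ← Real.rpow_mul hq0.le]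
      nth_rewrite 1 [← Real.rpow_one ((Qz z : ℝ))]
      rw [← Real.rpow_add hq0]
      congr 1
      ring
    exact key
  have hfin : ∑ z ∈ Λ d (N^2), (Qz z : ℝ) * u z =
      ∑ z ∈ Λ d (N^2), ((Qz z : ℝ)) ^ (-((d:ℝ)/2)) :=
    Finset.sum_congr rfl hstepD
  have hd0 : (d:ℝ) ≠ 0 := by
    have := NeZero.pos d
    positivity
  rw [hstepA]
  rw [eq_div_iff hd0, mul_comm]
  rw [hstepC, hfin]

end Sym

end St1

open St1

/-- for `α = 2`, the limit
`D_{i,j} = lim_{N→∞} (1/log N) Σ_{0<‖z‖≤N} z_i z_j p(z)` exists in `ℝ`,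
and `D_{i,j} = 0` when `i ≠ j`. -/
theorem statement1 (d : ℕ) [NeZero d] (hd : 1 ≤ d) (i j : Fin d) :
    ∃ D : ℝ,
      Filter.Tendsto
        (fun N : ℕ => (Real.log N)⁻¹ *
          ∑' z : Fin d → ℤ,
            (if z ≠ 0 ∧ znorm d z ≤ (N : ℝ) then (z i : ℝ) * (z j : ℝ) * pker d 2 z else 0))
        Filter.atTop (nhds D) ∧ (i ≠ j → D = 0) := by
  have hd0 : (d:ℝ) ≠ 0 := by
    have := NeZero.pos d
    positivity
  by_cases hij : i = j
  · subst hij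
    refine ⟨ω d, ?_, fun h => absurd rfl h⟩
    obtain ⟨C, hC⟩ := main_est (d := d) hd
    have hC0 : 0 ≤ C := le_trans (abs_nonneg _) (hC 2 le_rfl)
    have hfun : (fun N : ℕ => (Real.log N)⁻¹ *
        ∑' z : Fin d → ℤ,
          (if z ≠ 0 ∧ znorm d z ≤ (N : ℝ) then (z i : ℝ) * (z i : ℝ) * pker d 2 z else 0)) =
        (fun N : ℕ => (Real.log N)⁻¹ *
          ((∑ z ∈ Λ d (N^2), ((Qz z : ℝ)) ^ (-((d:ℝ)/2))) / d)) :=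
      funext fun N => by rw [tsum_red i i N, diag i N]
    rw [hfun]
    have hlogto : Tendsto (fun N : ℕ => Real.log N) atTop atTop :=
      Real.tendsto_log_atTop.comp tendsto_natCast_atTop_atTop
    have hinv : Tendsto (fun N : ℕ => (Real.log N)⁻¹) atTop (nhds 0) :=
      hlogto.inv_tendsto_atTop
    have hg : Tendsto (fun N : ℕ => C * ((Real.log N)⁻¹ / d)) atTop (nhds 0) := by
      have := (hinv.div_const (d:ℝ)).const_mul C
      simpa using this
    have hzero : Tendsto (fun N : ℕ => (Real.log N)⁻¹ *
        ((∑ z ∈ Λ d (N^2), ((Qz z : ℝ)) ^ (-((d:ℝ)/2))) / d) - ω d) atTop (nhds 0) := by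
      apply squeeze_zero_norm' _ hg
      filter_upwards [eventually_ge_atTop 2] with N hN
      have hN1 : (1:ℝ) < (N:ℝ) := by
        have : (2:ℝ) ≤ (N:ℝ) := by exact_mod_cast hN
        linarith
      have hlogpos : 0 < Real.log N := Real.log_pos hN1
      have hsplit : (Real.log N)⁻¹ *
          ((∑ z ∈ Λ d (N^2), ((Qz z : ℝ)) ^ (-((d:ℝ)/2))) / d) - ω d =
          ((Real.log N)⁻¹ / d) *
            ((∑ z ∈ Λ d (N^2), ((Qz z : ℝ)) ^ (-((d:ℝ)/2))) - ω d * d * Real.log N) := by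
        field_simp
      rw [Real.norm_eq_abs, hsplit, abs_mul]
      have h1 : |(Real.log N)⁻¹ / (d:ℝ)| = (Real.log N)⁻¹ / d := by
        apply abs_of_nonneg
        positivity
      rw [h1]
      have h2 := hC N hN
      calc (Real.log N)⁻¹ / (d:ℝ) *
          |(∑ z ∈ Λ d (N^2), ((Qz z : ℝ)) ^ (-((d:ℝ)/2))) - ω d * d * Real.log N|
          ≤ (Real.log N)⁻¹ / (d:ℝ) * C := by
            apply mul_le_mul_of_nonneg_left h2
            positivity
        _ = C * ((Real.log N)⁻¹ / d) := by ring
    have h2 := hzero.add_const (ω d)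
    rw [zero_add] at h2
    simpa only [sub_add_cancel] using h2
  · refine ⟨0, ?_, fun _ => rfl⟩
    have hfun : (fun N : ℕ => (Real.log N)⁻¹ *
        ∑' z : Fin d → ℤ,
          (if z ≠ 0 ∧ znorm d z ≤ (N : ℝ) then (z i : ℝ) * (z j : ℝ) * pker d 2 z else 0)) =
        (fun N : ℕ => (0:ℝ)) :=
      funext fun N => by rw [tsum_red i j N, offdiag i j hij N, mul_zero]
    rw [hfun]
    exact tendsto_const_nhds
end

section
/- Let d ≥ 1, a ∈ ℝ^d and β ∈ ℝ. Then the complex-valued function u ↦ ‖u‖^{-(d+1)} (e^{iβ(u·a)} − 1 − iβ(u·a)·1_{‖u‖≤1}) is Lebesgue integrable over the half-space {u ∈ ℝ^d : u₁ > 0}. -/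
open MeasureTheory Set Metric
open scoped ENNReal NNReal

lemma exp_bound_quad (x : ℝ) :
    ‖Complex.exp (Complex.I * x) - 1 - Complex.I * x‖ ≤ 3 * x ^ 2 := by
  have habs : ‖Complex.I * (x:ℂ)‖ = |x| := by
    simp [map_mul]
  rcases le_or_gt |x| 1 with h | h
  · have h' : ‖Complex.I * (x:ℂ)‖ ≤ 1 := by rw [habs]; exact h
    calc ‖Complex.exp (Complex.I * x) - 1 - Complex.I * x‖
        ≤ ‖Complex.I * (x:ℂ)‖ ^ 2 := Complex.norm_exp_sub_one_sub_id_le h'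
      _ = x ^ 2 := by rw [habs, sq_abs]
      _ ≤ 3 * x ^ 2 := by nlinarith [sq_nonneg x]
  · have h1 : ‖Complex.exp (Complex.I * x)‖ = 1 := by
      rw [mul_comm]; exact Complex.norm_exp_ofReal_mul_I x
    have h2 : 1 ≤ x ^ 2 := by nlinarith [sq_abs x]
    calc ‖Complex.exp (Complex.I * x) - 1 - Complex.I * x‖
        ≤ ‖Complex.exp (Complex.I * x) - 1‖ + ‖Complex.I * (x:ℂ)‖ := norm_sub_le _ _
      _ ≤ (‖Complex.exp (Complex.I * x)‖ + ‖(1:ℂ)‖) + ‖Complex.I * (x:ℂ)‖ := by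
          gcongr; exact norm_sub_le _ _
      _ = 2 + |x| := by simp [h1, habs]; norm_num
      _ ≤ 3 * x ^ 2 := by nlinarith [sq_abs x, abs_nonneg x]

lemma exp_bound_two (x : ℝ) :
    ‖Complex.exp (Complex.I * x) - 1‖ ≤ 2 := by
  have h1 : ‖Complex.exp (Complex.I * x)‖ = 1 := by
    rw [mul_comm]; exact Complex.norm_exp_ofReal_mul_I x
  calc ‖Complex.exp (Complex.I * x) - 1‖
      ≤ ‖Complex.exp (Complex.I * x)‖ + ‖(1:ℂ)‖ := norm_sub_le _ _
    _ = 2 := by rw [h1]; norm_num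

lemma radial_lintegral {E : Type*} [NormedAddCommGroup E] [NormedSpace ℝ E]
    [MeasurableSpace E] [BorelSpace E] [FiniteDimensional ℝ E] [Nontrivial E]
    (μ : Measure E) [μ.IsAddHaarMeasure] {G : ℝ → ℝ≥0∞} (hG : Measurable G) :
    ∫⁻ x, G ‖x‖ ∂μ = μ.toSphere univ *
      ∫⁻ y in Ioi (0:ℝ), ENNReal.ofReal (y ^ (Module.finrank ℝ E - 1)) * G y := by
  have h1 : ∫⁻ x, G ‖x‖ ∂μ = ∫⁻ x in ({0}ᶜ : Set E), G ‖x‖ ∂μ := by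
    rw [MeasureTheory.restrict_compl_singleton]
  rw [h1, ← lintegral_subtype_comap (measurableSet_singleton (0:E)).compl (fun x => G ‖x‖)]
  have h2 := (μ.measurePreserving_homeomorphUnitSphereProd).lintegral_comp
    (f := fun p : sphere (0:E) 1 × Ioi (0:ℝ) => G p.2.1)
    (hG.comp (measurable_subtype_coe.comp measurable_snd))
  have h3 : ∀ x : ({0}ᶜ : Set E), ((homeomorphUnitSphereProd E) x).2.1 = ‖(x : E)‖ := fun x => by simp
  simp only [h3] at h2
  rw [h2]
  have h5 : ∫⁻ (b : sphere (0:E) 1 × Ioi (0:ℝ)), G b.2.1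
      ∂(μ.toSphere.prod (Measure.volumeIoiPow (Module.finrank ℝ E - 1))) =
      ∫⁻ _s : sphere (0:E) 1, (∫⁻ y : Ioi (0:ℝ), G y.1
        ∂(Measure.volumeIoiPow (Module.finrank ℝ E - 1))) ∂μ.toSphere :=
    lintegral_prod _ ((hG.comp (measurable_subtype_coe.comp measurable_snd)).aemeasurable)
  rw [h5]
  have h4 : ∫⁻ (y : Ioi (0:ℝ)), G y.1 ∂(Measure.volumeIoiPow (Module.finrank ℝ E - 1)) =
      ∫⁻ y in Ioi (0:ℝ), ENNReal.ofReal (y ^ (Module.finrank ℝ E - 1)) * G y := by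
    have h6 : ∫⁻ (y : Ioi (0:ℝ)), G y.1
        ∂((Measure.comap Subtype.val volume).withDensity
          fun r : Ioi (0:ℝ) => ENNReal.ofReal (r.1 ^ (Module.finrank ℝ E - 1))) =
        ∫⁻ y : Ioi (0:ℝ), ENNReal.ofReal (y.1 ^ (Module.finrank ℝ E - 1)) * G y.1
          ∂(Measure.comap Subtype.val volume) :=
      lintegral_withDensity_eq_lintegral_mul _
        ((measurable_subtype_coe.pow_const _).ennreal_ofReal)
        (hG.comp measurable_subtype_coe)
    rw [Measure.volumeIoiPow, h6, lintegral_subtype_comap measurableSet_Ioi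
      (fun y : ℝ => ENNReal.ofReal (y ^ (Module.finrank ℝ E - 1)) * G y)]
  simp only [h4]
  rw [lintegral_const, mul_comm]




/-- for `α = 1`,
`u ↦ ‖u‖^{-(d+1)} (e^{iβ(u·a)} − 1 − iβ(u·a)·1_{‖u‖≤1})` is Lebesgue integrable over
the half-space `{u ∈ ℝ^d : u₁ > 0}`. -/
theorem statement3 (d : ℕ) [NeZero d] (hd : 1 ≤ d)
    (a : EuclideanSpace ℝ (Fin d)) (β : ℝ) :
    MeasureTheory.IntegrableOn
      (fun u : EuclideanSpace ℝ (Fin d) =>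
        ((‖u‖ ^ (-((d : ℝ) + 1)) : ℝ) : ℂ) *
          (Complex.exp (Complex.I * (β : ℂ) * ((inner ℝ u a : ℝ) : ℂ)) - 1
            - Complex.I * (β : ℂ) * ((inner ℝ u a : ℝ) : ℂ) * (if ‖u‖ ≤ 1 then 1 else 0)))
      {u : EuclideanSpace ℝ (Fin d) | 0 < u 0} := by
  haveI : Nontrivial (EuclideanSpace ℝ (Fin d)) :=
    Module.nontrivial_of_finrank_pos (R := ℝ) (by rw [finrank_euclideanSpace_fin]; omega)
  set F := fun u : EuclideanSpace ℝ (Fin d) =>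
    ((‖u‖ ^ (-((d : ℝ) + 1)) : ℝ) : ℂ) *
      (Complex.exp (Complex.I * (β : ℂ) * ((inner ℝ u a : ℝ) : ℂ)) - 1
        - Complex.I * (β : ℂ) * ((inner ℝ u a : ℝ) : ℂ) * (if ‖u‖ ≤ 1 then 1 else 0)) with hF
  set C : ℝ := 3 * β ^ 2 * ‖a‖ ^ 2 with hC
  have hC0 : 0 ≤ C := by positivity
  set g : ℝ → ℝ := fun y => if y ≤ 1 then C * y ^ ((1:ℝ) - d) else 2 * y ^ (-((d:ℝ) + 1))
    with hgdef
  set G : ℝ → ℝ≥0∞ := fun y => ENNReal.ofReal (g y) with hGdef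
  have hg_meas : Measurable g := by
    apply Measurable.ite measurableSet_Iic
    · fun_prop
    · fun_prop
  have hG_meas : Measurable G := hg_meas.ennreal_ofReal
  have hinner : Measurable fun u : EuclideanSpace ℝ (Fin d) => (inner ℝ u a : ℝ) :=
    (continuous_id.inner continuous_const).measurable
  have hb_meas : Measurable fun u : EuclideanSpace ℝ (Fin d) =>
      Complex.I * (β:ℂ) * ((inner ℝ u a : ℝ) : ℂ) :=
    (Complex.measurable_ofReal.comp hinner).const_mul (Complex.I * (β:ℂ))
  have hFm : Measurable F := by
    apply Measurable.mul
    · exact Complex.measurable_ofReal.comp (by fun_prop)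
    · exact ((Complex.measurable_exp.comp hb_meas).sub measurable_const).sub
        (hb_meas.mul (Measurable.ite (measurableSet_le measurable_norm measurable_const)
          measurable_const measurable_const))
  -- pointwise bound
  have key : ∀ u : EuclideanSpace ℝ (Fin d), u ≠ 0 → ENNReal.ofReal ‖F u‖ ≤ G ‖u‖ := by
    intro u hu
    have hn : 0 < ‖u‖ := norm_pos_iff.2 hu
    set t : ℝ := inner ℝ u a with ht
    set x : ℝ := β * t with hx
    have hxe : Complex.I * (β:ℂ) * ((t:ℝ):ℂ) = Complex.I * ((x:ℝ):ℂ) := by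
      rw [hx]; push_cast; ring
    apply ENNReal.ofReal_le_ofReal
    have hr0 : (0:ℝ) ≤ ‖u‖ ^ (-((d:ℝ)+1)) := Real.rpow_nonneg hn.le _
    have hnorm : ‖((‖u‖ ^ (-((d : ℝ) + 1)) : ℝ) : ℂ)‖ = ‖u‖ ^ (-((d:ℝ)+1)) := by
      rw [Complex.norm_real, Real.norm_of_nonneg hr0]
    by_cases h1 : ‖u‖ ≤ 1
    · have hb : ‖F u‖ ≤ ‖u‖ ^ (-((d:ℝ)+1)) * (3 * x ^ 2) := by
        rw [hF, norm_mul, hnorm]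
        gcongr
        simp only [if_pos h1, mul_one, hxe]
        rw [← ht, hxe]
        exact exp_bound_quad x
      have ht2 : t ^ 2 ≤ (‖u‖ * ‖a‖) ^ 2 := by
        rw [← sq_abs t]
        exact pow_le_pow_left₀ (abs_nonneg t) (abs_real_inner_le_norm u a) 2
      have hx2 : 3 * x ^ 2 ≤ C * ‖u‖ ^ 2 := by
        have : 3 * x ^ 2 = 3 * β ^ 2 * t ^ 2 := by rw [hx]; ring
        rw [this, hC]
        nlinarith [sq_nonneg β, ht2]
      have hpow : ‖u‖ ^ (-((d:ℝ)+1)) * ‖u‖ ^ (2:ℕ) = ‖u‖ ^ ((1:ℝ) - d) := by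
        rw [← Real.rpow_natCast ‖u‖ 2, ← Real.rpow_add hn]
        congr 1
        push_cast
        ring
      calc ‖F u‖ ≤ ‖u‖ ^ (-((d:ℝ)+1)) * (3 * x ^ 2) := hb
        _ ≤ ‖u‖ ^ (-((d:ℝ)+1)) * (C * ‖u‖ ^ 2) := by gcongr
        _ = C * (‖u‖ ^ (-((d:ℝ)+1)) * ‖u‖ ^ (2:ℕ)) := by ring
        _ = C * ‖u‖ ^ ((1:ℝ) - d) := by rw [hpow]
        _ = g ‖u‖ := by rw [hgdef]; simp [if_pos h1]
    · have hb : ‖F u‖ ≤ ‖u‖ ^ (-((d:ℝ)+1)) * 2 := by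
        rw [hF, norm_mul, hnorm]
        gcongr
        simp only [if_neg h1, mul_zero, sub_zero, hxe]
        rw [← ht, hxe]
        exact exp_bound_two x
      calc ‖F u‖ ≤ ‖u‖ ^ (-((d:ℝ)+1)) * 2 := hb
        _ = 2 * ‖u‖ ^ (-((d:ℝ)+1)) := by ring
        _ = g ‖u‖ := by rw [hgdef]; simp [if_neg h1]
  have hae : ∀ᵐ u ∂(volume : Measure (EuclideanSpace ℝ (Fin d))),
      ENNReal.ofReal ‖F u‖ ≤ G ‖u‖ := by
    have h0 : ∀ᵐ u ∂(volume : Measure (EuclideanSpace ℝ (Fin d))), u ∉ ({0} : Set _) :=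
      (Set.countable_singleton _).ae_notMem _
    filter_upwards [h0] with u hu
    exact key u (by simpa using hu)
  -- 1D integrability
  have hInt : IntegrableOn (fun y : ℝ => y ^ (d - 1) * g y) (Ioi (0:ℝ)) := by
    rw [← Ioc_union_Ioi_eq_Ioi (zero_le_one (α := ℝ))]
    apply IntegrableOn.union
    · apply IntegrableOn.congr_fun
        (integrableOn_const measure_Ioc_lt_top.ne : IntegrableOn (fun _ => C) _ _)
      · intro y hy
        have h0 : (0:ℝ) < y := hy.1
        have e1 : (y:ℝ) ^ (d-1 : ℕ) = y ^ (((d:ℝ)) - 1) := by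
          rw [← Real.rpow_natCast y (d-1), Nat.cast_sub hd, Nat.cast_one]
        simp only [hgdef, if_pos hy.2]
        rw [e1, mul_comm C, ← mul_assoc, ← Real.rpow_add h0]
        norm_num
      · exact measurableSet_Ioc
    · apply IntegrableOn.congr_fun
        ((integrableOn_Ioi_rpow_of_lt (show (-2:ℝ) < -1 by norm_num) one_pos).const_mul 2)
      · intro y hy
        have h0 : (0:ℝ) < y := lt_trans one_pos hy
        have e1 : (y:ℝ) ^ (d-1 : ℕ) = y ^ (((d:ℝ)) - 1) := by
          rw [← Real.rpow_natCast y (d-1), Nat.cast_sub hd, Nat.cast_one]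
        simp only [hgdef, if_neg (not_le.2 (mem_Ioi.1 hy))]
        rw [e1, show y ^ ((d:ℝ) - 1) * (2 * y ^ (-((d:ℝ) + 1))) =
          2 * (y ^ ((d:ℝ) - 1) * y ^ (-((d:ℝ) + 1))) from by ring, ← Real.rpow_add h0,
          show ((d:ℝ) - 1) + (-((d:ℝ) + 1)) = (-2:ℝ) by ring]
      · exact measurableSet_Ioi
  constructor
  · exact hFm.aestronglyMeasurable.restrict
  · rw [hasFiniteIntegral_iff_norm]
    calc ∫⁻ u in {u : EuclideanSpace ℝ (Fin d) | 0 < u 0}, ENNReal.ofReal ‖F u‖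
        ≤ ∫⁻ u in {u : EuclideanSpace ℝ (Fin d) | 0 < u 0}, G ‖u‖ :=
          lintegral_mono_ae (ae_restrict_of_ae hae)
      _ ≤ ∫⁻ u : EuclideanSpace ℝ (Fin d), G ‖u‖ := setLIntegral_le_lintegral _ _
      _ = (volume : Measure (EuclideanSpace ℝ (Fin d))).toSphere univ *
          ∫⁻ y in Ioi (0:ℝ), ENNReal.ofReal
            (y ^ (Module.finrank ℝ (EuclideanSpace ℝ (Fin d)) - 1)) * G y :=
          radial_lintegral _ hG_meas
      _ < ⊤ := by
          apply ENNReal.mul_lt_top (measure_lt_top _ _)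
          rw [finrank_euclideanSpace_fin]
          have hcongr : ∀ y ∈ Ioi (0:ℝ),
              ENNReal.ofReal (y ^ (d - 1)) * G y = ENNReal.ofReal (y ^ (d-1) * g y) :=
            fun y hy => (ENNReal.ofReal_mul (pow_nonneg (le_of_lt hy) _)).symm
          rw [setLIntegral_congr_fun measurableSet_Ioi (fun y hy => hcongr y hy)]
          exact hInt.setLIntegral_lt_top
end

section
/- Let d ≥ 1, 1 < α < 2, a ∈ ℝ^d and β ∈ ℝ. Then lim_{N→∞} N^α · Σ_{z∈ℤ^d, z≠0} p(z) (e^{iβ(z·a)/N} − 1 − iβ(z·a)/N) = ∫_{ℝ^d} p̄(u) (e^{iβ(u·a)} − 1 − iβ(u·a)) du, where the limit is in ℂ and the sum on the left converges absolutely for each N ≥ 1. -/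
open scoped Classical

/-- The continuous extension `p̄(u) = ‖u‖^{-(d+α)} (2·1_{u₁>0} + 1_{u₁=0})`, `p̄(0) = 0`. -/
noncomputable def pbar (d : ℕ) [NeZero d] (α : ℝ) (u : EuclideanSpace ℝ (Fin d)) : ℝ :=
  if u = 0 then 0
  else ‖u‖ ^ (-((d : ℝ) + α)) *
    ((if 0 < u 0 then (2 : ℝ) else 0) + (if u 0 = 0 then 1 else 0))

open MeasureTheory Set Filter

noncomputable section St6

namespace St6

/-! ### The function `g(t) = e^{it} - 1 - it` and its bound -/

def gc (t : ℝ) : ℂ := Complex.exp (Complex.I * t) - 1 - Complex.I * t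

lemma gc_norm_le (t : ℝ) : ‖gc t‖ ≤ 3 * min (t ^ 2) |t| := by
  have habs : ‖Complex.I * (t:ℂ)‖ = |t| := by
    rw [norm_mul, Complex.norm_I, one_mul, Complex.norm_real, Real.norm_eq_abs]
  rcases le_or_gt |t| 1 with h | h
  · have ht2 : t ^ 2 ≤ |t| := by nlinarith [abs_nonneg t, sq_abs t]
    have hb : ‖gc t‖ ≤ t ^ 2 := by
      have h2 := Complex.norm_exp_sub_one_sub_id_le (x := Complex.I * t) (by rw [habs]; exact h)
      rw [gc]
      calc ‖Complex.exp (Complex.I * t) - 1 - Complex.I * t‖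
          ≤ ‖Complex.I * t‖ ^ 2 := h2
        _ = t ^ 2 := by rw [habs, sq_abs]
    rw [min_eq_left ht2]
    nlinarith [sq_nonneg t]
  · have hexp : ‖Complex.exp (Complex.I * t)‖ = 1 := by
      rw [mul_comm, Complex.norm_exp_ofReal_mul_I]
    have h1 : ‖gc t‖ ≤ 1 + 1 + |t| := by
      rw [gc]
      refine (norm_sub_le _ _).trans ?_
      have : ‖Complex.I * (t:ℂ)‖ = |t| := by rw [habs]
      rw [this]
      gcongr
      refine (norm_sub_le _ _).trans ?_
      rw [hexp, norm_one]
    have hmin : min (t ^ 2) |t| = |t| := min_eq_right (by nlinarith [sq_abs t])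
    rw [hmin]
    linarith

lemma gc_continuous : Continuous gc := by
  unfold gc
  fun_prop

/-! ### Integrability of the dominating function -/

lemma finite_setLIntegral_Ioc_rpow {r : ℝ} (hr : -1 < r) :
    ∫⁻ t in Ioc (0:ℝ) 1, ENNReal.ofReal (t ^ r) < ⊤ := by
  have h : IntegrableOn (fun t : ℝ => t ^ r) (Ioc 0 1) := by
    rw [← intervalIntegrable_iff_integrableOn_Ioc_of_le zero_le_one]
    exact intervalIntegral.intervalIntegrable_rpow' hr
  exact h.lintegral_lt_top

lemma finite_setLIntegral_Ioi_rpow {r : ℝ} (hr : r < -1) :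
    ∫⁻ t in Ioi (1:ℝ), ENNReal.ofReal (t ^ r) < ⊤ := by
  exact (integrableOn_Ioi_rpow_of_lt hr one_pos).lintegral_lt_top

lemma integrable_min_rpow (d : ℕ) [NeZero d] {c1 c2 : ℝ}
    (h1 : -(d:ℝ) < c1) (h1' : c1 < 0) (h2 : c2 < -(d:ℝ)) :
    Integrable (fun x : EuclideanSpace ℝ (Fin d) => min (‖x‖ ^ c1) (‖x‖ ^ c2)) := by
  have hdpos : (0:ℝ) < d := by exact_mod_cast (NeZero.pos d)
  have hc2 : c2 < 0 := by linarith
  have hmeas : Measurable (fun x : EuclideanSpace ℝ (Fin d) => min (‖x‖ ^ c1) (‖x‖ ^ c2)) := by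
    fun_prop
  have hnn : ∀ x : EuclideanSpace ℝ (Fin d), 0 ≤ min (‖x‖ ^ c1) (‖x‖ ^ c2) :=
    fun x => le_min (Real.rpow_nonneg (norm_nonneg x) _) (Real.rpow_nonneg (norm_nonneg x) _)
  refine ⟨hmeas.aestronglyMeasurable, ?_⟩
  rw [hasFiniteIntegral_iff_ofReal (Eventually.of_forall hnn)]
  rw [lintegral_eq_lintegral_meas_le volume (Eventually.of_forall hnn) hmeas.aemeasurable]
  -- the superlevel sets are contained in balls
  have hsub : ∀ (c : ℝ), c < 0 → (∀ x : EuclideanSpace ℝ (Fin d), min (‖x‖ ^ c1) (‖x‖ ^ c2) ≤ ‖x‖ ^ c) →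
      ∀ t : ℝ, 0 < t →
      {x : EuclideanSpace ℝ (Fin d) | t ≤ min (‖x‖ ^ c1) (‖x‖ ^ c2)} ⊆
        Metric.closedBall 0 (t ^ c⁻¹) := by
    intro c hc hle t ht x hx
    have hx' : t ≤ ‖x‖ ^ c := le_trans hx (hle x)
    have hxne : ‖x‖ ≠ 0 := by
      intro h0
      rw [h0, Real.zero_rpow hc.ne] at hx'
      linarith
    have hxpos : 0 < ‖x‖ := lt_of_le_of_ne (norm_nonneg x) (Ne.symm hxne)
    rw [Metric.mem_closedBall, dist_zero_right]
    exact (Real.le_rpow_inv_iff_of_neg hxpos ht hc).mpr hx'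
  have hball : ∀ (c : ℝ), c < 0 → ∀ t : ℝ, 0 < t →
      volume (Metric.closedBall (0 : EuclideanSpace ℝ (Fin d)) (t ^ c⁻¹)) =
        ENNReal.ofReal (t ^ (c⁻¹ * d)) * volume (Metric.ball (0 : EuclideanSpace ℝ (Fin d)) 1) := by
    intro c hc t ht
    rw [Measure.addHaar_closedBall _ _ (Real.rpow_nonneg ht.le _)]
    congr 2
    rw [finrank_euclideanSpace_fin, ← Real.rpow_natCast (t ^ c⁻¹) d,
      ← Real.rpow_mul ht.le]
  set mB := volume (Metric.ball (0 : EuclideanSpace ℝ (Fin d)) 1) with hmB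
  have hmBfin : mB ≠ ⊤ := measure_ball_lt_top.ne
  calc
    ∫⁻ t in Ioi (0:ℝ), volume {x : EuclideanSpace ℝ (Fin d) | t ≤ min (‖x‖ ^ c1) (‖x‖ ^ c2)}
      ≤ ∫⁻ t in Ioc (0:ℝ) 1 ∪ Ioi 1,
          volume {x : EuclideanSpace ℝ (Fin d) | t ≤ min (‖x‖ ^ c1) (‖x‖ ^ c2)} :=
        lintegral_mono_set Ioi_subset_Ioc_union_Ioi
    _ ≤ (∫⁻ t in Ioc (0:ℝ) 1,
          volume {x : EuclideanSpace ℝ (Fin d) | t ≤ min (‖x‖ ^ c1) (‖x‖ ^ c2)}) +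
        ∫⁻ t in Ioi (1:ℝ),
          volume {x : EuclideanSpace ℝ (Fin d) | t ≤ min (‖x‖ ^ c1) (‖x‖ ^ c2)} :=
        lintegral_union_le _ _ _
    _ < ⊤ := by
        refine ENNReal.add_lt_top.2 ⟨?_, ?_⟩
        · calc
            ∫⁻ t in Ioc (0:ℝ) 1,
                volume {x : EuclideanSpace ℝ (Fin d) | t ≤ min (‖x‖ ^ c1) (‖x‖ ^ c2)}
              ≤ ∫⁻ t in Ioc (0:ℝ) 1, ENNReal.ofReal (t ^ (c2⁻¹ * d)) * mB := by
                refine setLIntegral_mono' measurableSet_Ioc fun t ht => ?_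
                rw [← hball c2 hc2 t ht.1]
                exact measure_mono (hsub c2 hc2 (fun x => min_le_right _ _) t ht.1)
            _ = (∫⁻ t in Ioc (0:ℝ) 1, ENNReal.ofReal (t ^ (c2⁻¹ * d))) * mB :=
                lintegral_mul_const' _ _ hmBfin
            _ < ⊤ := by
                refine ENNReal.mul_lt_top ?_ measure_ball_lt_top
                refine finite_setLIntegral_Ioc_rpow ?_
                rw [inv_mul_eq_div, lt_div_iff_of_neg hc2]
                linarith
        · calc
            ∫⁻ t in Ioi (1:ℝ),
                volume {x : EuclideanSpace ℝ (Fin d) | t ≤ min (‖x‖ ^ c1) (‖x‖ ^ c2)}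
              ≤ ∫⁻ t in Ioi (1:ℝ), ENNReal.ofReal (t ^ (c1⁻¹ * d)) * mB := by
                refine setLIntegral_mono' measurableSet_Ioi fun t ht => ?_
                have ht0 : (0:ℝ) < t := lt_trans one_pos ht
                rw [← hball c1 h1' t ht0]
                exact measure_mono (hsub c1 h1' (fun x => min_le_left _ _) t ht0)
            _ = (∫⁻ t in Ioi (1:ℝ), ENNReal.ofReal (t ^ (c1⁻¹ * d))) * mB :=
                lintegral_mul_const' _ _ hmBfin
            _ < ⊤ := by
                refine ENNReal.mul_lt_top ?_ measure_ball_lt_top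
                refine finite_setLIntegral_Ioi_rpow ?_
                rw [inv_mul_eq_div, div_lt_iff_of_neg h1']
                linarith

section Main

variable (d : ℕ) [NeZero d] (α β : ℝ) (a : EuclideanSpace ℝ (Fin d))

def toE : (Fin d → ℝ) → EuclideanSpace ℝ (Fin d) :=
  (MeasurableEquiv.toLp 2 (Fin d → ℝ))

@[simp] lemma toE_apply (u : Fin d → ℝ) (i : Fin d) : toE d u i = u i := rfl

lemma toE_eq_zero_iff {u : Fin d → ℝ} : toE d u = 0 ↔ ∀ i, u i = 0 := by
  constructor
  · intro h i
    have := congrFun (congrArg (fun (x : EuclideanSpace ℝ (Fin d)) => (x : Fin d → ℝ)) h) i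
    simpa using this
  · intro h
    ext i
    simpa using h i

lemma norm_toE (u : Fin d → ℝ) : ‖toE d u‖ = Real.sqrt (∑ i, (u i) ^ 2) := by
  rw [EuclideanSpace.norm_eq]
  congr 1
  refine Finset.sum_congr rfl fun i _ => ?_
  rw [toE_apply, Real.norm_eq_abs, sq_abs]

/-- The integrand `F(u) = p̄(u) g(β ⟨u,a⟩)`. -/
def F (u : EuclideanSpace ℝ (Fin d)) : ℂ := (pbar d α u : ℂ) * gc (β * (inner ℝ u a : ℝ))

/-- The scaled floor function. -/
def Φ (N : ℕ) (u : Fin d → ℝ) : Fin d → ℤ := fun i => ⌊(N:ℝ) * u i⌋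

/-- Lattice point `z/N` as an element of Euclidean space. -/
def vE (N : ℕ) (z : Fin d → ℤ) : EuclideanSpace ℝ (Fin d) :=
  toE d (fun i => (z i : ℝ) / N)

/-- The step function. -/
def G (N : ℕ) (u : Fin d → ℝ) : ℂ := F d α β a (vE d N (Φ d N u))

/-- The box of side `1/N` attached to `z`. -/
def Bx (N : ℕ) (z : Fin d → ℤ) : Set (Fin d → ℝ) :=
  univ.pi fun i => Ico ((z i : ℝ)/N) (((z i : ℝ) + 1)/N)

variable {d}

lemma mem_Bx_iff {N : ℕ} (hN : 1 ≤ N) {z : Fin d → ℤ} {u : Fin d → ℝ} :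
    u ∈ Bx d N z ↔ Φ d N u = z := by
  have hN0 : (0:ℝ) < N := by exact_mod_cast hN
  rw [Bx, Set.mem_univ_pi, funext_iff]
  refine forall_congr' fun i => ?_
  rw [Set.mem_Ico, Φ, Int.floor_eq_iff]
  constructor
  · rintro ⟨h1, h2⟩
    constructor
    · calc ((z i : ℝ)) = (z i : ℝ) / N * N := by field_simp
        _ ≤ u i * N := by gcongr
        _ = N * u i := by ring
    · calc (N:ℝ) * u i = u i * N := by ring
        _ < ((z i : ℝ) + 1) / N * N := by gcongr
        _ = (z i : ℝ) + 1 := by field_simp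
  · rintro ⟨h1, h2⟩
    constructor
    · rw [div_le_iff₀ hN0]
      linarith [h1]
    · rw [lt_div_iff₀ hN0]
      linarith [h2]

lemma Bx_measurable (N : ℕ) (z : Fin d → ℤ) : MeasurableSet (Bx d N z) :=
  MeasurableSet.univ_pi fun _ => measurableSet_Ico

lemma Bx_disjoint {N : ℕ} (hN : 1 ≤ N) :
    Pairwise (Function.onFun Disjoint fun z : Fin d → ℤ => Bx d N z) := by
  intro z z' hzz'
  rw [Function.onFun, Set.disjoint_left]
  intro u hu hu'
  exact hzz' (((mem_Bx_iff hN).mp hu).symm.trans ((mem_Bx_iff hN).mp hu'))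

lemma Bx_union {N : ℕ} (hN : 1 ≤ N) : (⋃ z : Fin d → ℤ, Bx d N z) = univ := by
  refine Set.eq_univ_of_forall fun u => ?_
  exact Set.mem_iUnion.mpr ⟨Φ d N u, (mem_Bx_iff hN).mpr rfl⟩

lemma Bx_volume {N : ℕ} (hN : 1 ≤ N) (z : Fin d → ℤ) :
    volume (Bx d N z) = ENNReal.ofReal ((1 / (N:ℝ)) ^ d) := by
  have hN0 : (0:ℝ) < N := by exact_mod_cast hN
  rw [Bx, volume_pi_pi]
  have hlen : ∀ i : Fin d, volume (Ico ((z i : ℝ)/N) (((z i : ℝ) + 1)/N))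
      = ENNReal.ofReal (1 / (N:ℝ)) := by
    intro i
    rw [Real.volume_Ico]
    congr 1
    field_simp
    ring
  simp_rw [hlen]
  rw [Finset.prod_const, Finset.card_univ, Fintype.card_fin,
    ← ENNReal.ofReal_pow (by positivity)]

/-! ### Norm bound for `F` -/

lemma F_zero : F d α β a 0 = 0 := by
  rw [F, pbar, if_pos rfl]
  simp

lemma F_norm_le (u : EuclideanSpace ℝ (Fin d)) :
    ‖F d α β a u‖ ≤ (6 * max 1 ((|β| * ‖a‖) ^ 2)) *
      min (‖u‖ ^ ((2:ℝ) - ((d:ℝ) + α))) (‖u‖ ^ ((1:ℝ) - ((d:ℝ) + α))) := by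
  set K := |β| * ‖a‖ with hK
  have hK0 : 0 ≤ K := by positivity
  set M := max 1 (K ^ 2) with hM
  have hM1 : (1:ℝ) ≤ M := le_max_left _ _
  have hK2M : K ^ 2 ≤ M := le_max_right _ _
  have hKM : K ≤ M := by
    rcases le_total K 1 with h | h
    · linarith
    · nlinarith
  by_cases hu : u = 0
  · subst hu
    rw [F_zero, norm_zero]
    positivity
  · have hn : 0 < ‖u‖ := norm_pos_iff.mpr hu
    set t := β * (inner ℝ u a : ℝ) with ht
    have htle : |t| ≤ K * ‖u‖ := by
      rw [ht, abs_mul, hK]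
      calc |β| * |(inner ℝ u a : ℝ)| ≤ |β| * (‖u‖ * ‖a‖) := by
            gcongr
            exact abs_real_inner_le_norm u a
        _ = |β| * ‖a‖ * ‖u‖ := by ring
    have hpb : |pbar d α u| ≤ 2 * ‖u‖ ^ (-((d:ℝ) + α)) := by
      rw [pbar, if_neg hu, abs_mul]
      have h1 : |‖u‖ ^ (-((d:ℝ) + α))| = ‖u‖ ^ (-((d:ℝ) + α)) :=
        abs_of_nonneg (Real.rpow_nonneg hn.le _)
      rw [h1]
      have h2 : |(if 0 < u 0 then (2:ℝ) else 0) + (if u 0 = 0 then 1 else 0)| ≤ 2 := by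
        split_ifs with ha hb hb
        · exact absurd ha (by rw [hb]; exact lt_irrefl 0)
        · norm_num
        · norm_num
        · norm_num
      calc ‖u‖ ^ (-((d:ℝ) + α)) * |(if 0 < u 0 then (2:ℝ) else 0) + (if u 0 = 0 then 1 else 0)|
          ≤ ‖u‖ ^ (-((d:ℝ) + α)) * 2 :=
            mul_le_mul_of_nonneg_left h2 (Real.rpow_nonneg hn.le _)
        _ = 2 * ‖u‖ ^ (-((d:ℝ) + α)) := mul_comm _ _
    have hFest : ∀ s : ℝ, 0 ≤ s → ‖gc t‖ ≤ s →
        ‖F d α β a u‖ ≤ 2 * ‖u‖ ^ (-((d:ℝ) + α)) * s := by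
      intro s hs0 hs
      rw [F, norm_mul, Complex.norm_real, Real.norm_eq_abs]
      exact mul_le_mul hpb hs (norm_nonneg _) (by positivity)
    have hgmin := gc_norm_le t
    have hg2 : ‖gc t‖ ≤ 3 * (K * ‖u‖) ^ 2 := by
      refine hgmin.trans ?_
      have h : min (t ^ 2) |t| ≤ (K * ‖u‖) ^ 2 := by
        refine (min_le_left _ _).trans ?_
        nlinarith [le_abs_self t, neg_abs_le t]
      linarith
    have hg1 : ‖gc t‖ ≤ 3 * (K * ‖u‖) := by
      refine hgmin.trans ?_
      have h : min (t ^ 2) |t| ≤ K * ‖u‖ := (min_le_right _ _).trans htle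
      linarith
    have hR0 : (0:ℝ) ≤ ‖u‖ ^ (-((d:ℝ) + α)) := Real.rpow_nonneg hn.le _
    have hA : ‖F d α β a u‖ ≤ (6 * M) * ‖u‖ ^ ((2:ℝ) - ((d:ℝ) + α)) := by
      refine (hFest _ (by positivity) hg2).trans ?_
      have hrw : ‖u‖ ^ ((2:ℝ) - ((d:ℝ) + α)) = ‖u‖ ^ (-((d:ℝ) + α)) * ‖u‖ ^ (2:ℕ) := by
        rw [← Real.rpow_natCast ‖u‖ 2, ← Real.rpow_add hn]
        norm_num
        ring_nf
      rw [hrw]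
      nlinarith [mul_nonneg (mul_nonneg hR0 (sq_nonneg ‖u‖)) (sub_nonneg.mpr hK2M),
        sq_nonneg ‖u‖, sq_nonneg K, mul_nonneg hR0 (sq_nonneg ‖u‖)]
    have hB : ‖F d α β a u‖ ≤ (6 * M) * ‖u‖ ^ ((1:ℝ) - ((d:ℝ) + α)) := by
      refine (hFest _ (by positivity) hg1).trans ?_
      have hrw : ‖u‖ ^ ((1:ℝ) - ((d:ℝ) + α)) = ‖u‖ ^ (-((d:ℝ) + α)) * ‖u‖ := by
        rw [show ((1:ℝ) - ((d:ℝ) + α)) = -((d:ℝ) + α) + 1 by ring, Real.rpow_add hn,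
          Real.rpow_one]
      rw [hrw]
      nlinarith [mul_nonneg (mul_nonneg hR0 hn.le) (sub_nonneg.mpr hKM),
        mul_nonneg hR0 hn.le]
    rcases le_total (‖u‖ ^ ((2:ℝ) - ((d:ℝ) + α))) (‖u‖ ^ ((1:ℝ) - ((d:ℝ) + α))) with h | h
    · rw [min_eq_left h]; exact hA
    · rw [min_eq_right h]; exact hB

/-! ### Scaling identities -/

lemma znorm_pos {z : Fin d → ℤ} (hz : z ≠ 0) : 0 < znorm d z := by
  rw [znorm, Real.sqrt_pos]
  obtain ⟨i, hi⟩ : ∃ i, z i ≠ 0 := by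
    by_contra h
    push_neg at h
    exact hz (funext fun i => h i)
  refine Finset.sum_pos' (fun j _ => sq_nonneg _) ⟨i, Finset.mem_univ i, ?_⟩
  have : ((z i : ℝ)) ≠ 0 := Int.cast_ne_zero.mpr hi
  positivity

lemma znorm_ge_one {z : Fin d → ℤ} (hz : z ≠ 0) : 1 ≤ znorm d z := by
  obtain ⟨i, hi⟩ : ∃ i, z i ≠ 0 := by
    by_contra h
    push_neg at h
    exact hz (funext fun i => h i)
  have h1 : (1:ℝ) ≤ ((z i : ℝ)) ^ 2 := by
    have : (1:ℤ) ≤ |z i| := Int.one_le_abs hi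
    have h2 : (1:ℝ) ≤ |(z i : ℝ)| := by
      rw [← Int.cast_abs]
      exact_mod_cast this
    nlinarith [abs_nonneg ((z i : ℝ)), sq_abs ((z i : ℝ))]
  have h2 : (1:ℝ) ≤ ∑ j, ((z j : ℝ)) ^ 2 := by
    refine h1.trans ?_
    exact Finset.single_le_sum (fun j _ => sq_nonneg ((z j : ℝ))) (Finset.mem_univ i)
  rw [znorm]
  calc (1:ℝ) = Real.sqrt 1 := Real.sqrt_one.symm
    _ ≤ _ := Real.sqrt_le_sqrt h2

lemma vE_zero_iff {N : ℕ} (hN : 1 ≤ N) {z : Fin d → ℤ} : vE d N z = 0 ↔ z = 0 := by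
  have hN0 : (N:ℝ) ≠ 0 := by positivity
  rw [vE, toE_eq_zero_iff]
  constructor
  · intro h
    funext i
    have := h i
    rw [div_eq_zero_iff] at this
    rcases this with h' | h'
    · exact_mod_cast h'
    · exact absurd h' hN0
  · intro h i
    rw [h]
    simp

lemma norm_vE {N : ℕ} (hN : 1 ≤ N) (z : Fin d → ℤ) : ‖vE d N z‖ = znorm d z / N := by
  have hN0 : (0:ℝ) < N := by exact_mod_cast hN
  rw [vE, norm_toE, znorm]
  have h1 : ∀ i : Fin d, ((z i : ℝ) / N) ^ 2 = ((z i : ℝ)) ^ 2 / (N:ℝ) ^ 2 := fun i =>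
    div_pow _ _ 2
  simp_rw [h1]
  rw [← Finset.sum_div, Real.sqrt_div (by positivity), Real.sqrt_sq hN0.le]

lemma vE_coord (N : ℕ) (z : Fin d → ℤ) (i : Fin d) : vE d N z i = (z i : ℝ) / N := rfl

lemma pbar_vE {N : ℕ} (hN : 1 ≤ N) (z : Fin d → ℤ) :
    pbar d α (vE d N z) = (N:ℝ) ^ ((d:ℝ) + α) * pker d α z := by
  have hN0 : (0:ℝ) < N := by exact_mod_cast hN
  by_cases hz : z = 0
  · rw [hz, (vE_zero_iff hN).mpr rfl, pbar, if_pos rfl, pker, if_pos rfl, mul_zero]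
  · rw [pbar, if_neg (fun h => hz ((vE_zero_iff hN).mp h)), pker, if_neg hz, norm_vE hN]
    have hzn : 0 < znorm d z := znorm_pos hz
    have hpow : (znorm d z / N) ^ (-((d:ℝ) + α))
        = (N:ℝ) ^ ((d:ℝ) + α) * znorm d z ^ (-((d:ℝ) + α)) := by
      rw [Real.div_rpow hzn.le hN0.le, div_eq_mul_inv, ← Real.rpow_neg hN0.le, neg_neg,
        mul_comm]
    have hind1 : (0 < vE d N z 0) ↔ 0 < z 0 := by
      rw [vE_coord]
      constructor
      · intro h
        by_contra h'
        push_neg at h'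
        have : ((z 0 : ℝ)) ≤ 0 := by exact_mod_cast h'
        have : (z 0 : ℝ) / N ≤ 0 := div_nonpos_of_nonpos_of_nonneg this hN0.le
        linarith
      · intro h
        have : (0:ℝ) < (z 0 : ℝ) := by exact_mod_cast h
        positivity
    have hind2 : (vE d N z 0 = 0) ↔ z 0 = 0 := by
      rw [vE_coord, div_eq_zero_iff]
      constructor
      · intro h
        rcases h with h | h
        · exact Int.cast_eq_zero.mp h
        · exact absurd h (by positivity)
      · intro h
        left
        exact Int.cast_eq_zero.mpr h
    rw [hpow]
    by_cases h1 : 0 < z 0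
    · rw [if_pos (hind1.mpr h1), if_pos h1, if_neg (hind2.not.mpr (by omega)),
        if_neg (by omega)]
      ring
    · by_cases h2 : z 0 = 0
      · rw [if_neg (hind1.not.mpr h1), if_neg h1, if_pos (hind2.mpr h2), if_pos h2]
        ring
      · rw [if_neg (hind1.not.mpr h1), if_neg h1, if_neg (hind2.not.mpr h2), if_neg h2]
        ring

lemma inner_vE (N : ℕ) (z : Fin d → ℤ) :
    (inner ℝ (vE d N z) a : ℝ) = (∑ i, (z i : ℝ) * a i) / N := by
  rw [PiLp.inner_apply]
  rw [Finset.sum_div]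
  refine Finset.sum_congr rfl fun i _ => ?_
  rw [RCLike.inner_apply, starRingEnd_apply, star_trivial, vE_coord]
  ring

lemma key_scale {N : ℕ} (hN : 1 ≤ N) (z : Fin d → ℤ) :
    (((N:ℝ) ^ α : ℝ) : ℂ) * ((pker d α z : ℂ) * gc (β * (inner ℝ (vE d N z) a : ℝ)))
      = (((1/(N:ℝ)) ^ d : ℝ) : ℂ) * F d α β a (vE d N z) := by
  have hN0 : (0:ℝ) < N := by exact_mod_cast hN
  have hreal : ((1/(N:ℝ)) ^ d) * (N:ℝ) ^ ((d:ℝ) + α) = (N:ℝ) ^ α := by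
    rw [one_div, inv_pow, ← Real.rpow_natCast (N:ℝ) d, ← Real.rpow_neg hN0.le,
      ← Real.rpow_add hN0]
    ring_nf
  have h2 : (((N:ℝ) ^ α : ℝ) : ℂ)
      = (((1/(N:ℝ)) ^ d : ℝ) : ℂ) * (((N:ℝ) ^ ((d:ℝ) + α) : ℝ) : ℂ) := by
    rw [← Complex.ofReal_mul, hreal]
  rw [F, pbar_vE (α := α) (N := N) hN z, h2, Complex.ofReal_mul]
  ring

/-- The summand appearing in the statement. -/
def term (N : ℕ) (z : Fin d → ℤ) : ℂ :=
  (pker d α z : ℂ) *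
    (Complex.exp (Complex.I * (β : ℂ) * ((∑ i, (z i : ℝ) * a i : ℝ) : ℂ) / (N : ℂ)) - 1
      - Complex.I * (β : ℂ) * ((∑ i, (z i : ℝ) * a i : ℝ) : ℂ) / (N : ℂ))

lemma term_eq {N : ℕ} (hN : 1 ≤ N) (z : Fin d → ℤ) :
    term α β a N z = (pker d α z : ℂ) * gc (β * (inner ℝ (vE d N z) a : ℝ)) := by
  have hN0 : (N:ℝ) ≠ 0 := by positivity
  rw [term, gc, inner_vE a]
  have harg : Complex.I * (β : ℂ) * ((∑ i, (z i : ℝ) * a i : ℝ) : ℂ) / (N : ℂ)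
      = Complex.I * ((β * ((∑ i, (z i : ℝ) * a i) / N) : ℝ) : ℂ) := by
    push_cast
    ring
  rw [harg]

/-! ### The dominating function -/

/-- The dominating function for the step functions `G N`. -/
def bound (u : Fin d → ℝ) : ℝ :=
  (6 * max 1 ((|β| * ‖a‖) ^ 2)) * (1 + Real.sqrt d) ^ ((d:ℝ) + α) *
    min (‖toE d u‖ ^ ((2:ℝ) - ((d:ℝ) + α))) (‖toE d u‖ ^ ((1:ℝ) - ((d:ℝ) + α)))

lemma bound_nonneg (u : Fin d → ℝ) : 0 ≤ bound α β a u := by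
  rw [bound]
  have h1 : (0:ℝ) ≤ ‖toE d u‖ ^ ((2:ℝ) - ((d:ℝ) + α)) := Real.rpow_nonneg (norm_nonneg _) _
  have h2 : (0:ℝ) ≤ ‖toE d u‖ ^ ((1:ℝ) - ((d:ℝ) + α)) := Real.rpow_nonneg (norm_nonneg _) _
  have h3 : (0:ℝ) ≤ (1 + Real.sqrt d) ^ ((d:ℝ) + α) :=
    Real.rpow_nonneg (by positivity) _
  have h4 : (0:ℝ) ≤ 6 * max 1 ((|β| * ‖a‖) ^ 2) := by positivity
  have := le_min h1 h2
  positivity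

lemma dist_toE_vE {N : ℕ} (hN : 1 ≤ N) (u : Fin d → ℝ) :
    ‖toE d u - vE d N (Φ d N u)‖ ≤ Real.sqrt d / N := by
  have hN0 : (0:ℝ) < N := by exact_mod_cast hN
  have hcoord : ∀ i : Fin d, |u i - ((Φ d N u i : ℝ)) / N| ≤ 1 / N := by
    intro i
    have h1 : ((Φ d N u i : ℝ)) ≤ N * u i := Int.floor_le _
    have h2 : (N:ℝ) * u i < (Φ d N u i : ℝ) + 1 := Int.lt_floor_add_one _
    rw [abs_le]
    constructor
    · have : ((Φ d N u i : ℝ)) / N ≤ u i := by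
        rw [div_le_iff₀ hN0]
        linarith [mul_comm (N:ℝ) (u i)]
      have hpos : (0:ℝ) < 1 / N := by positivity
      linarith
    · have : u i ≤ (Φ d N u i : ℝ) / N + 1 / N := by
        rw [← add_div, le_div_iff₀ hN0]
        linarith [mul_comm (N:ℝ) (u i)]
      linarith
  have happ : ∀ i : Fin d, (toE d u - vE d N (Φ d N u)) i = u i - ((Φ d N u i : ℝ)) / N :=
    fun i => rfl
  rw [EuclideanSpace.norm_eq]
  have hsum : ∑ i, ‖(toE d u - vE d N (Φ d N u)) i‖ ^ 2 ≤ ∑ _i : Fin d, (1 / (N:ℝ)) ^ 2 := by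
    refine Finset.sum_le_sum fun i _ => ?_
    rw [happ i, Real.norm_eq_abs]
    have := hcoord i
    have h0 : (0:ℝ) ≤ |u i - ((Φ d N u i : ℝ)) / N| := abs_nonneg _
    nlinarith
  calc Real.sqrt (∑ i, ‖(toE d u - vE d N (Φ d N u)) i‖ ^ 2)
      ≤ Real.sqrt (∑ _i : Fin d, (1 / (N:ℝ)) ^ 2) := Real.sqrt_le_sqrt hsum
    _ = Real.sqrt (d * (1 / (N:ℝ)) ^ 2) := by
        rw [Finset.sum_const, Finset.card_univ, Fintype.card_fin, nsmul_eq_mul]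
    _ = Real.sqrt d / N := by
        rw [Real.sqrt_mul (by positivity), Real.sqrt_sq (by positivity)]
        rw [one_div, div_eq_mul_inv]

lemma dom (hdα : 2 < (d:ℝ) + α) {N : ℕ} (hN : 1 ≤ N) (u : Fin d → ℝ) :
    ‖G d α β a N u‖ ≤ bound α β a u := by
  have hN0 : (0:ℝ) < N := by exact_mod_cast hN
  set z := Φ d N u with hzdef
  by_cases hz : z = 0
  · have : vE d N z = 0 := (vE_zero_iff hN).mpr hz
    rw [G, ← hzdef, this, F_zero, norm_zero]
    exact bound_nonneg α β a u
  · have hv : vE d N z ≠ 0 := fun h => hz ((vE_zero_iff hN).mp h)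
    have hvpos : 0 < ‖vE d N z‖ := norm_pos_iff.mpr hv
    have hu0 : toE d u ≠ 0 := by
      intro h
      apply hz
      have hz0 : ∀ i, u i = 0 := (toE_eq_zero_iff d).mp h
      funext i
      rw [hzdef]
      simp [Φ, hz0 i]
    have hupos : 0 < ‖toE d u‖ := norm_pos_iff.mpr hu0
    have hv1 : (1:ℝ)/N ≤ ‖vE d N z‖ := by
      rw [norm_vE hN]
      gcongr
      exact znorm_ge_one hz
    set D := 1 + Real.sqrt d with hD
    have hD1 : (1:ℝ) ≤ D := by
      rw [hD]
      linarith [Real.sqrt_nonneg (d:ℝ)]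
    have hD0 : (0:ℝ) < D := by linarith
    have hcomp : ‖toE d u‖ / D ≤ ‖vE d N z‖ := by
      have h1 : ‖toE d u‖ ≤ ‖vE d N z‖ + Real.sqrt d / N := by
        calc ‖toE d u‖ = ‖vE d N z + (toE d u - vE d N z)‖ := by
              have habel : vE d N z + (toE d u - vE d N z) = toE d u := by abel
              rw [habel]
          _ ≤ ‖vE d N z‖ + ‖toE d u - vE d N z‖ := norm_add_le _ _
          _ ≤ _ := by
              gcongr
              rw [hzdef]
              exact dist_toE_vE hN u
      have h2 : Real.sqrt d / N ≤ Real.sqrt d * ‖vE d N z‖ := by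
        calc Real.sqrt d / N = Real.sqrt d * (1/N) := by ring
          _ ≤ Real.sqrt d * ‖vE d N z‖ :=
              mul_le_mul_of_nonneg_left hv1 (Real.sqrt_nonneg _)
      rw [div_le_iff₀ hD0]
      calc ‖toE d u‖ ≤ ‖vE d N z‖ + Real.sqrt d * ‖vE d N z‖ := by linarith
        _ = ‖vE d N z‖ * D := by rw [hD]; ring
    have hcle : ∀ c : ℝ, c ≤ 0 → -c ≤ (d:ℝ) + α →
        ‖vE d N z‖ ^ c ≤ D ^ ((d:ℝ) + α) * ‖toE d u‖ ^ c := by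
      intro c hc hc'
      have h0 : 0 < ‖toE d u‖ / D := by positivity
      have h1 : ‖vE d N z‖ ^ c ≤ (‖toE d u‖ / D) ^ c :=
        Real.rpow_le_rpow_of_nonpos h0 hcomp hc
      refine h1.trans ?_
      rw [Real.div_rpow (norm_nonneg _) hD0.le, div_eq_mul_inv, ← Real.rpow_neg hD0.le]
      have h2 : D ^ (-c) ≤ D ^ ((d:ℝ) + α) := Real.rpow_le_rpow_of_exponent_le hD1 hc'
      calc ‖toE d u‖ ^ c * D ^ (-c) ≤ ‖toE d u‖ ^ c * D ^ ((d:ℝ) + α) :=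
            mul_le_mul_of_nonneg_left h2 (Real.rpow_nonneg (norm_nonneg _) _)
        _ = D ^ ((d:ℝ) + α) * ‖toE d u‖ ^ c := mul_comm _ _
    have hc1 : ‖vE d N z‖ ^ ((2:ℝ) - ((d:ℝ) + α))
        ≤ D ^ ((d:ℝ) + α) * ‖toE d u‖ ^ ((2:ℝ) - ((d:ℝ) + α)) :=
      hcle _ (by linarith) (by linarith)
    have hc2 : ‖vE d N z‖ ^ ((1:ℝ) - ((d:ℝ) + α))
        ≤ D ^ ((d:ℝ) + α) * ‖toE d u‖ ^ ((1:ℝ) - ((d:ℝ) + α)) :=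
      hcle _ (by linarith) (by linarith)
    have hminle : min (‖vE d N z‖ ^ ((2:ℝ) - ((d:ℝ) + α))) (‖vE d N z‖ ^ ((1:ℝ) - ((d:ℝ) + α)))
        ≤ D ^ ((d:ℝ) + α) *
          min (‖toE d u‖ ^ ((2:ℝ) - ((d:ℝ) + α))) (‖toE d u‖ ^ ((1:ℝ) - ((d:ℝ) + α))) := by
      rcases le_total (‖toE d u‖ ^ ((2:ℝ) - ((d:ℝ) + α)))
          (‖toE d u‖ ^ ((1:ℝ) - ((d:ℝ) + α))) with h | h
      · rw [min_eq_left h]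
        exact (min_le_left _ _).trans hc1
      · rw [min_eq_right h]
        exact (min_le_right _ _).trans hc2
    have hFb := F_norm_le α β a (vE d N z)
    have hC0 : (0:ℝ) ≤ 6 * max 1 ((|β| * ‖a‖) ^ 2) := by positivity
    calc ‖G d α β a N u‖ = ‖F d α β a (vE d N z)‖ := by rw [G, ← hzdef]
      _ ≤ (6 * max 1 ((|β| * ‖a‖) ^ 2)) *
          min (‖vE d N z‖ ^ ((2:ℝ) - ((d:ℝ) + α))) (‖vE d N z‖ ^ ((1:ℝ) - ((d:ℝ) + α))) := hFb
      _ ≤ (6 * max 1 ((|β| * ‖a‖) ^ 2)) * (D ^ ((d:ℝ) + α) *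
          min (‖toE d u‖ ^ ((2:ℝ) - ((d:ℝ) + α))) (‖toE d u‖ ^ ((1:ℝ) - ((d:ℝ) + α)))) :=
          mul_le_mul_of_nonneg_left hminle hC0
      _ = bound α β a u := by rw [bound, hD]; ring

lemma bound_integrable (hd1 : 1 ≤ d) (hα1 : 1 < α) (hα2 : α < 2) :
    Integrable (bound α β a) volume := by
  have hd1' : (1:ℝ) ≤ d := by exact_mod_cast hd1
  have hbase : Integrable (fun x : EuclideanSpace ℝ (Fin d) =>
      min (‖x‖ ^ ((2:ℝ) - ((d:ℝ) + α))) (‖x‖ ^ ((1:ℝ) - ((d:ℝ) + α)))) := by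
    refine integrable_min_rpow d ?_ ?_ ?_
    · linarith
    · linarith
    · linarith
  have mp : MeasurePreserving (toE d) volume volume :=
    (EuclideanSpace.volume_preserving_symm_measurableEquiv_toLp (Fin d)).symm
  have hcomp : Integrable ((fun x : EuclideanSpace ℝ (Fin d) =>
      min (‖x‖ ^ ((2:ℝ) - ((d:ℝ) + α))) (‖x‖ ^ ((1:ℝ) - ((d:ℝ) + α)))) ∘ toE d) volume :=
    (mp.integrable_comp hbase.aestronglyMeasurable).mpr hbase
  have := hcomp.const_mul ((6 * max 1 ((|β| * ‖a‖) ^ 2)) * (1 + Real.sqrt d) ^ ((d:ℝ) + α))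
  exact this.congr (Eventually.of_forall fun u => rfl)

/-! ### Integrability of the step functions -/

lemma G_meas (N : ℕ) : Measurable (G d α β a N) := by
  have hΦ : Measurable (Φ d N) :=
    measurable_pi_lambda _ fun i => ((measurable_const.mul (measurable_pi_apply i)).floor)
  exact (measurable_of_countable fun z : Fin d → ℤ => F d α β a (vE d N z)).comp hΦ

lemma G_integrable (hd1 : 1 ≤ d) (hα1 : 1 < α) (hα2 : α < 2) (hdα : 2 < (d:ℝ) + α)
    {N : ℕ} (hN : 1 ≤ N) : Integrable (G d α β a N) volume := by
  refine Integrable.mono' (bound_integrable α β a hd1 hα1 hα2)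
    (G_meas α β a N).aestronglyMeasurable ?_
  exact ae_of_all _ (dom α β a hdα hN)

/-! ### The box decomposition identities -/

lemma box_integral {N : ℕ} (hN : 1 ≤ N) (z : Fin d → ℤ) :
    ∫ u in Bx d N z, G d α β a N u = (((1/(N:ℝ)) ^ d : ℝ) : ℂ) * F d α β a (vE d N z) := by
  have hEq : EqOn (G d α β a N) (fun _ => F d α β a (vE d N z)) (Bx d N z) := by
    intro u hu
    rw [G, (mem_Bx_iff hN).mp hu]
  rw [setIntegral_congr_fun (Bx_measurable N z) hEq, setIntegral_const, measureReal_def, Bx_volume hN z,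
    ENNReal.toReal_ofReal (by positivity), Complex.real_smul]

lemma box_integral_norm {N : ℕ} (hN : 1 ≤ N) (z : Fin d → ℤ) :
    ∫ u in Bx d N z, ‖G d α β a N u‖ = ((1/(N:ℝ)) ^ d) * ‖F d α β a (vE d N z)‖ := by
  have hEq : EqOn (fun u => ‖G d α β a N u‖) (fun _ => ‖F d α β a (vE d N z)‖) (Bx d N z) := by
    intro u hu
    simp only
    rw [G, (mem_Bx_iff hN).mp hu]
  rw [setIntegral_congr_fun (Bx_measurable N z) hEq, setIntegral_const, measureReal_def, Bx_volume hN z,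
    ENNReal.toReal_ofReal (by positivity), smul_eq_mul]

lemma summable_normF {N : ℕ} (hN : 1 ≤ N) (hInt : Integrable (G d α β a N) volume) :
    Summable (fun z : Fin d → ℤ => ‖F d α β a (vE d N z)‖) := by
  have hN0 : (0:ℝ) < N := by exact_mod_cast hN
  have hInt' : Integrable (fun u => ‖G d α β a N u‖) volume := hInt.norm
  have hs := hasSum_integral_iUnion (fun z : Fin d → ℤ => Bx_measurable N z)
    (Bx_disjoint hN) (by rw [Bx_union hN]; exact hInt'.integrableOn)
  have hsum : Summable (fun z : Fin d → ℤ => ((1/(N:ℝ)) ^ d) * ‖F d α β a (vE d N z)‖) := by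
    refine hs.summable.congr fun z => ?_
    exact box_integral_norm α β a hN z
  have hc : ((1/(N:ℝ)) ^ d) ≠ 0 := by positivity
  have h2 := hsum.mul_left (((1/(N:ℝ)) ^ d)⁻¹)
  refine h2.congr fun z => ?_
  rw [← mul_assoc, inv_mul_cancel₀ hc, one_mul]

lemma integral_G_eq {N : ℕ} (hN : 1 ≤ N) (hInt : Integrable (G d α β a N) volume) :
    ∫ u, G d α β a N u
      = ∑' z : Fin d → ℤ, (((1/(N:ℝ)) ^ d : ℝ) : ℂ) * F d α β a (vE d N z) := by
  have h1 := integral_iUnion (fun z : Fin d → ℤ => Bx_measurable N z)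
    (Bx_disjoint hN) (f := G d α β a N) (by rw [Bx_union hN]; exact hInt.integrableOn)
  rw [Bx_union hN, setIntegral_univ] at h1
  rw [h1]
  exact tsum_congr fun z => box_integral α β a hN z

/-! ### Almost-everywhere convergence -/

lemma ae_tendsto (hdα : 2 < (d:ℝ) + α) :
    ∀ᵐ u : Fin d → ℝ, Tendsto (fun N : ℕ => G d α β a N u) atTop
      (nhds (F d α β a (toE d u))) := by
  have hnull : volume {u : Fin d → ℝ | u 0 = 0} = 0 := by
    have hset : {u : Fin d → ℝ | u 0 = 0}
        = Set.univ.pi (fun i : Fin d => if i = 0 then ({0} : Set ℝ) else univ) := by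
      ext u
      simp only [mem_setOf_eq, Set.mem_univ_pi]
      constructor
      · intro h i
        by_cases hi : i = 0
        · subst hi; simp [h]
        · simp [hi]
      · intro h
        have := h 0
        simpa using this
    rw [hset, volume_pi_pi]
    refine Finset.prod_eq_zero (Finset.mem_univ 0) ?_
    simp
  have hae : ∀ᵐ u : Fin d → ℝ, u 0 ≠ 0 := by
    rw [ae_iff]
    simpa only [ne_eq, not_not] using hnull
  filter_upwards [hae] with u hu
  rcases lt_or_gt_of_ne hu with hneg | hpos
  · -- u 0 < 0 : both sides vanish
    have h1 : ¬ (0 < toE d u 0) := by rw [toE_apply]; linarith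
    have h2 : toE d u 0 ≠ 0 := by rw [toE_apply]; exact hu
    have hF0 : F d α β a (toE d u) = 0 := by
      by_cases h0 : toE d u = 0
      · rw [F, pbar, if_pos h0]; simp
      · rw [F, pbar, if_neg h0, if_neg h1, if_neg h2]; simp
    rw [hF0]
    refine Tendsto.congr' ?_ tendsto_const_nhds
    filter_upwards [eventually_ge_atTop 1] with N hN
    have hN0 : (0:ℝ) < N := by exact_mod_cast hN
    have hfl : Φ d N u 0 < 0 := by
      rw [Φ]
      rw [show (0:ℤ) = ((0:ℤ)) from rfl]
      refine Int.floor_lt.mpr ?_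
      push_cast
      exact mul_neg_of_pos_of_neg hN0 hneg
    have hz0 : ((Φ d N u 0 : ℝ)) < 0 := by exact_mod_cast hfl
    have hv0 : vE d N (Φ d N u) 0 < 0 := by
      rw [vE_coord]
      exact div_neg_of_neg_of_pos hz0 hN0
    have hvne : vE d N (Φ d N u) ≠ 0 := by
      intro h
      rw [h] at hv0
      exact lt_irrefl 0 hv0
    symm
    rw [G, F, pbar, if_neg hvne, if_neg (not_lt.mpr hv0.le), if_neg (ne_of_lt hv0)]
    simp
  · -- u 0 > 0
    have hu0 : toE d u ≠ 0 := fun h => hu (((toE_eq_zero_iff d).mp h) 0)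
    have hupos : 0 < ‖toE d u‖ := norm_pos_iff.mpr hu0
    have hvt : Tendsto (fun N : ℕ => vE d N (Φ d N u)) atTop (nhds (toE d u)) := by
      rw [tendsto_iff_norm_sub_tendsto_zero]
      refine squeeze_zero' (Eventually.of_forall fun N => norm_nonneg _) ?_
        (tendsto_const_div_atTop_nhds_zero_nat (Real.sqrt d))
      filter_upwards [eventually_ge_atTop 1] with N hN
      rw [norm_sub_rev]
      exact dist_toE_vE hN u
    have hev : ∀ᶠ N : ℕ in atTop, 0 < Φ d N u 0 := by
      have hts : Tendsto (fun N : ℕ => (N:ℝ)) atTop atTop := tendsto_natCast_atTop_atTop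
      filter_upwards [hts.eventually_ge_atTop ((u 0)⁻¹)] with N hN
      have h1 : (1:ℝ) ≤ (N:ℝ) * u 0 := by
        calc (1:ℝ) = (u 0)⁻¹ * u 0 := (inv_mul_cancel₀ hpos.ne').symm
          _ ≤ (N:ℝ) * u 0 := mul_le_mul_of_nonneg_right hN hpos.le
      have : (1:ℤ) ≤ Φ d N u 0 := by
        rw [Φ]
        refine Int.le_floor.mpr ?_
        push_cast
        exact h1
      omega
    have hFeq : F d α β a (toE d u)
        = ((‖toE d u‖ ^ (-((d:ℝ) + α)) * 2 : ℝ) : ℂ) * gc (β * (inner ℝ (toE d u) a : ℝ)) := by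
      rw [F, pbar, if_neg hu0, if_pos (show 0 < toE d u 0 from hpos),
        if_neg (show toE d u 0 ≠ 0 from ne_of_gt hpos), add_zero]
    have hcont : ContinuousAt (fun w : EuclideanSpace ℝ (Fin d) =>
        ((‖w‖ ^ (-((d:ℝ) + α)) * 2 : ℝ) : ℂ) * gc (β * (inner ℝ w a : ℝ))) (toE d u) := by
      have c1 : ContinuousAt (fun w : EuclideanSpace ℝ (Fin d) => ‖w‖ ^ (-((d:ℝ) + α)))
          (toE d u) :=
        ContinuousAt.comp (Real.continuousAt_rpow_const _ _ (Or.inl hupos.ne'))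
          continuous_norm.continuousAt
      have c2 : Continuous (fun w : EuclideanSpace ℝ (Fin d) => β * (inner ℝ w a : ℝ)) :=
        continuous_const.mul (continuous_id.inner continuous_const)
      exact (Complex.continuous_ofReal.continuousAt.comp (c1.mul continuousAt_const)).mul
        ((gc_continuous.comp c2).continuousAt)
    have htend := hcont.tendsto.comp hvt
    simp only [Function.comp_def] at htend
    rw [hFeq]
    refine Tendsto.congr' ?_ htend
    filter_upwards [hev, eventually_ge_atTop 1] with N h1 h2
    have hN0 : (0:ℝ) < N := by exact_mod_cast h2
    have hv0 : 0 < vE d N (Φ d N u) 0 := by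
      rw [vE_coord]
      have : (0:ℝ) < ((Φ d N u 0 : ℝ)) := by exact_mod_cast h1
      positivity
    have hvne : vE d N (Φ d N u) ≠ 0 := by
      intro h
      rw [h] at hv0
      exact lt_irrefl 0 hv0
    rw [G, F, pbar, if_neg hvne, if_pos hv0, if_neg (ne_of_gt hv0), add_zero]

end Main

end St6

end St6

/-- for `1 < α < 2`,
`lim_{N→∞} N^α Σ_{z≠0} p(z)(e^{iβ(z·a)/N} − 1 − iβ(z·a)/N)
  = ∫ p̄(u)(e^{iβ(u·a)} − 1 − iβ(u·a)) du`,
the sum converging absolutely for each `N ≥ 1`. -/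
theorem statement6 (d : ℕ) [NeZero d] (hd : 1 ≤ d) (α : ℝ) (hα1 : 1 < α) (hα2 : α < 2)
    (a : EuclideanSpace ℝ (Fin d)) (β : ℝ) :
    (∀ N : ℕ, 1 ≤ N → Summable (fun z : Fin d → ℤ =>
        ‖(pker d α z : ℂ) *
          (Complex.exp (Complex.I * (β : ℂ) * ((∑ i, (z i : ℝ) * a i : ℝ) : ℂ) / (N : ℂ)) - 1
            - Complex.I * (β : ℂ) * ((∑ i, (z i : ℝ) * a i : ℝ) : ℂ) / (N : ℂ))‖)) ∧
    Filter.Tendsto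
      (fun N : ℕ => (((N : ℝ) ^ α : ℝ) : ℂ) *
        ∑' z : Fin d → ℤ, (pker d α z : ℂ) *
          (Complex.exp (Complex.I * (β : ℂ) * ((∑ i, (z i : ℝ) * a i : ℝ) : ℂ) / (N : ℂ)) - 1
            - Complex.I * (β : ℂ) * ((∑ i, (z i : ℝ) * a i : ℝ) : ℂ) / (N : ℂ)))
      Filter.atTop
      (nhds (∫ u : EuclideanSpace ℝ (Fin d),
        (pbar d α u : ℂ) *
          (Complex.exp (Complex.I * (β : ℂ) * ((inner ℝ u a : ℝ) : ℂ)) - 1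
            - Complex.I * (β : ℂ) * ((inner ℝ u a : ℝ) : ℂ)))) := by
  have hd1' : (1:ℝ) ≤ d := by exact_mod_cast hd
  have hdα : 2 < (d:ℝ) + α := by linarith
  have hterm_norm : ∀ N : ℕ, 1 ≤ N → ∀ z : Fin d → ℤ,
      ‖St6.term α β a N z‖
        = (((N:ℝ) ^ α)⁻¹ * (1/(N:ℝ)) ^ d) * ‖St6.F d α β a (St6.vE d N z)‖ := by
    intro N hN z
    have hN0 : (0:ℝ) < N := by exact_mod_cast hN
    have hNα : (0:ℝ) < (N:ℝ) ^ α := Real.rpow_pos_of_pos hN0 α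
    have hpow : (0:ℝ) < (1/(N:ℝ)) ^ d := by positivity
    have hcast : (((N:ℝ) ^ α : ℝ) : ℂ) ≠ 0 := Complex.ofReal_ne_zero.mpr hNα.ne'
    have hval : St6.term α β a N z
        = (((N:ℝ) ^ α : ℝ) : ℂ)⁻¹ *
            ((((1/(N:ℝ)) ^ d : ℝ) : ℂ) * St6.F d α β a (St6.vE d N z)) := by
      rw [St6.term_eq α β a hN z, ← St6.key_scale α β a hN z, ← mul_assoc,
        inv_mul_cancel₀ hcast, one_mul]
    rw [hval, norm_mul, norm_mul, norm_inv, Complex.norm_real, Complex.norm_real,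
      Real.norm_eq_abs, Real.norm_eq_abs, abs_of_pos hNα, abs_of_pos hpow]
    ring
  constructor
  · intro N hN
    have hInt := St6.G_integrable α β a hd hα1 hα2 hdα hN
    have hsumF := St6.summable_normF α β a hN hInt
    have h2 := hsumF.mul_left (((N:ℝ) ^ α)⁻¹ * (1/(N:ℝ)) ^ d)
    exact h2.congr fun z => (hterm_norm N hN z).symm
  · have hTend : Filter.Tendsto (fun N : ℕ => ∫ u : Fin d → ℝ, St6.G d α β a N u)
        Filter.atTop (nhds (∫ u : Fin d → ℝ, St6.F d α β a (St6.toE d u))) := by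
      refine MeasureTheory.tendsto_integral_filter_of_dominated_convergence (St6.bound α β a)
        (Filter.Eventually.of_forall fun N => (St6.G_meas α β a N).aestronglyMeasurable)
        ?_ (St6.bound_integrable α β a hd hα1 hα2) (St6.ae_tendsto α β a hdα)
      filter_upwards [Filter.eventually_ge_atTop 1] with N hN
      exact MeasureTheory.ae_of_all _ (St6.dom α β a hdα hN)
    have hIntEq : (∫ u : Fin d → ℝ, St6.F d α β a (St6.toE d u))
        = ∫ v : EuclideanSpace ℝ (Fin d), St6.F d α β a v := by
      have mp : MeasureTheory.MeasurePreserving (St6.toE d) volume volume :=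
        (EuclideanSpace.volume_preserving_symm_measurableEquiv_toLp (Fin d)).symm
      exact mp.integral_comp
        (MeasurableEquiv.measurableEmbedding (MeasurableEquiv.toLp 2 (Fin d → ℝ))) _
    have hFeq : (∫ v : EuclideanSpace ℝ (Fin d), St6.F d α β a v)
        = ∫ u : EuclideanSpace ℝ (Fin d), (pbar d α u : ℂ) *
            (Complex.exp (Complex.I * (β : ℂ) * ((inner ℝ u a : ℝ) : ℂ)) - 1
              - Complex.I * (β : ℂ) * ((inner ℝ u a : ℝ) : ℂ)) := by
      refine MeasureTheory.integral_congr_ae (Filter.Eventually.of_forall fun v => ?_)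
      rw [St6.F, St6.gc]
      simp only [Complex.ofReal_mul, mul_assoc]
    rw [hIntEq, hFeq] at hTend
    refine Filter.Tendsto.congr' ?_ hTend
    filter_upwards [Filter.eventually_ge_atTop 1] with N hN
    have hInt := St6.G_integrable α β a hd hα1 hα2 hdα hN
    rw [St6.integral_G_eq α β a hN hInt]
    have hkey : (((N:ℝ) ^ α : ℝ) : ℂ) * ∑' z : Fin d → ℤ, St6.term α β a N z
        = ∑' z : Fin d → ℤ,
            (((1/(N:ℝ)) ^ d : ℝ) : ℂ) * St6.F d α β a (St6.vE d N z) := by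
      rw [← tsum_mul_left]
      refine tsum_congr fun z => ?_
      rw [St6.term_eq α β a hN z]
      exact St6.key_scale α β a hN z
    rw [← hkey]
    rfl
end

section
/- Let d ≥ 1 and α > 1. Then m := Σ_{z∈ℤ^d, z≠0} z p(z) converges absolutely in ℝ^d, and for every a ∈ ℝ^d and β ∈ ℝ, lim_{N→∞} N · Σ_{z∈ℤ^d, z≠0} p(z) (e^{iβ(z·a)/N} − 1) = iβ (m·a), where the limit is in ℂ. -/
open Real Filter


lemma znorm_nonneg (d : ℕ) (z : Fin d → ℤ) : 0 ≤ znorm d z := Real.sqrt_nonneg _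

lemma abs_le_znorm (d : ℕ) (z : Fin d → ℤ) (i : Fin d) : |(z i : ℝ)| ≤ znorm d z := by
  rw [← Real.sqrt_sq_eq_abs]
  exact Real.sqrt_le_sqrt (Finset.single_le_sum (fun j _ => sq_nonneg ((z j : ℝ))) (Finset.mem_univ i))

lemma one_le_znorm {d : ℕ} {z : Fin d → ℤ} (hz : z ≠ 0) : 1 ≤ znorm d z := by
  obtain ⟨i, hi⟩ := Function.ne_iff.mp hz
  have h1 : (1 : ℝ) ≤ |(z i : ℝ)| := by
    rw [← Int.cast_abs]
    exact_mod_cast Int.one_le_abs (by simpa using hi)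
  exact h1.trans (abs_le_znorm d z i)

lemma znorm_pos {d : ℕ} {z : Fin d → ℤ} (hz : z ≠ 0) : 0 < znorm d z :=
  lt_of_lt_of_le one_pos (one_le_znorm hz)

lemma summable_g {t : ℝ} (ht : 1 < t) : Summable (fun x : ℤ => (1 + |(x : ℝ)|) ^ (-t)) := by
  have hnat : Summable (fun n : ℕ => (1 + |((n : ℤ) : ℝ)|) ^ (-t)) := by
    have h := (Real.summable_nat_rpow (p := -t)).mpr (by linarith)
    have := (summable_nat_add_iff 1).mpr h
    refine this.congr fun n => ?_
    have : |((n : ℤ) : ℝ)| = (n : ℝ) := by simp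
    rw [this]
    push_cast
    ring_nf
  refine Summable.of_nat_of_neg hnat (hnat.congr fun n => ?_)
  simp


lemma summable_pi_prod : ∀ (d : ℕ) (g : ℤ → ℝ), Summable g → (∀ x, 0 ≤ g x) →
    Summable (fun z : Fin d → ℤ => ∏ i, g (z i)) := by
  intro d
  induction d with
  | zero =>
    intro g _ _
    exact summable_of_finite_support (Set.toFinite _)
  | succ n ih =>
    intro g hg hg0
    have h1 : Summable (fun z : Fin n → ℤ => ∏ i, g (z i)) := ih g hg hg0
    have h0f : (0 : ℤ → ℝ) ≤ g := hg0
    have h0g : (0 : (Fin n → ℤ) → ℝ) ≤ fun z => ∏ i, g (z i) :=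
      fun z => Finset.prod_nonneg fun i _ => hg0 _
    have hprod := Summable.mul_of_nonneg hg h1 h0f h0g
    refine (Fin.consEquiv (fun _ : Fin (n+1) => ℤ)).summable_iff.mp (hprod.congr fun p => ?_)
    simp only [Function.comp, Fin.consEquiv_apply]
    rw [Fin.prod_univ_succ]
    simp

lemma summable_znorm_rpow {d : ℕ} (hd : 1 ≤ d) {t : ℝ} (ht : (d : ℝ) < t) :
    Summable (fun z : Fin d → ℤ => if z = 0 then 0 else znorm d z ^ (-t)) := by
  set t' : ℝ := t / d with ht'def
  have hd0 : (0 : ℝ) < d := by exact_mod_cast Nat.lt_of_lt_of_le Nat.zero_lt_one hd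
  have ht' : 1 < t' := (one_lt_div hd0).mpr ht
  have ht0 : 0 < t := lt_trans hd0 ht
  set G : ℤ → ℝ := fun x => (1 + |(x : ℝ)|) ^ (-t') with hGdef
  have hG0 : ∀ x, 0 ≤ G x := fun x => Real.rpow_nonneg (by positivity) _
  have hGsum : Summable (fun z : Fin d → ℤ => ∏ i, G (z i)) :=
    summable_pi_prod d G (summable_g ht') hG0
  have hGsum2 : Summable (fun z : Fin d → ℤ => (2:ℝ) ^ t * ∏ i, G (z i)) :=
    hGsum.mul_left _
  apply Summable.of_nonneg_of_le _ _ hGsum2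
  · intro z
    split
    · exact le_refl 0
    · exact Real.rpow_nonneg (znorm_nonneg d z) _
  · intro z
    by_cases hz : z = 0
    · rw [if_pos hz]
      have : (0:ℝ) ≤ ∏ i, G (z i) := Finset.prod_nonneg fun i _ => hG0 _
      positivity
    rw [if_neg hz]
    set M := znorm d z with hMdef
    have hM1 : 1 ≤ M := one_le_znorm hz
    have hM0 : 0 < M := lt_of_lt_of_le one_pos hM1
    have key : ∀ i : Fin d, (2 * M) ^ (-t') ≤ G (z i) := by
      intro i
      rw [hGdef]
      apply Real.rpow_le_rpow_of_nonpos (by positivity) _ (by linarith)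
      have := abs_le_znorm d z i
      rw [← hMdef] at this
      linarith
    have hprod : ((2 * M) ^ (-t')) ^ d ≤ ∏ i, G (z i) := by
      calc ((2 * M) ^ (-t')) ^ d = ∏ _i : Fin d, (2 * M) ^ (-t') := by
            rw [Finset.prod_const, Finset.card_univ, Fintype.card_fin]
        _ ≤ _ := Finset.prod_le_prod (fun i _ => by positivity) (fun i _ => key i)
    have heq : ((2 * M) ^ (-t')) ^ d = 2 ^ (-t) * M ^ (-t) := by
      rw [← Real.rpow_natCast ((2 * M) ^ (-t')) d, ← Real.rpow_mul (by positivity)]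
      have h1 : -t' * (d:ℝ) = -t := by rw [ht'def]; field_simp
      rw [h1, Real.mul_rpow (by norm_num) hM0.le]
    calc M ^ (-t) = 2 ^ t * (2 ^ (-t) * M ^ (-t)) := by
          rw [← mul_assoc, ← Real.rpow_add (by norm_num : (0:ℝ) < 2)]
          simp
      _ ≤ 2 ^ t * ∏ i, G (z i) := by
          rw [← heq]
          exact mul_le_mul_of_nonneg_left hprod (by positivity)


lemma norm_exp_mul_I_sub_one_le (t : ℝ) : ‖Complex.exp ((t : ℂ) * Complex.I) - 1‖ ≤ |t| := by
  set z := Complex.exp ((t : ℂ) * Complex.I) - 1 with hz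
  have hre : z.re = Real.cos t - 1 := by
    simp [hz, Complex.exp_ofReal_mul_I_re]
  have him : z.im = Real.sin t := by
    simp [hz, Complex.exp_ofReal_mul_I_im]
  have habs : ‖z‖ = Real.sqrt (z.re ^ 2 + z.im ^ 2) := by
    rw [Complex.norm_def, Complex.normSq_apply]
    ring_nf
  rw [habs, hre, him, ← Real.sqrt_sq_eq_abs]
  apply Real.sqrt_le_sqrt
  have h1 : 1 - t ^ 2 / 2 ≤ Real.cos t := Real.one_sub_sq_div_two_le_cos
  have h2 : Real.sin t ^ 2 + Real.cos t ^ 2 = 1 := Real.sin_sq_add_cos_sq t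
  nlinarith

lemma tendsto_nat_mul_exp_div_sub_one (w : ℂ) :
    Tendsto (fun N : ℕ => (N : ℂ) * (Complex.exp (w / (N : ℂ)) - 1)) atTop (nhds w) := by
  by_cases hw : w = 0
  · simpa [hw] using tendsto_const_nhds
  have hderiv : HasDerivAt Complex.exp 1 0 := by
    simpa using Complex.hasDerivAt_exp 0
  have hslope := hasDerivAt_iff_tendsto_slope.mp hderiv
  have hdiv : Tendsto (fun N : ℕ => w / (N : ℂ)) atTop (nhdsWithin 0 {(0:ℂ)}ᶜ) := by
    apply tendsto_nhdsWithin_of_tendsto_nhds_of_eventually_within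
    · have hr : Tendsto (fun N : ℕ => ((N : ℂ))⁻¹) atTop (nhds 0) := by
        have h0 := tendsto_one_div_atTop_nhds_zero_nat (𝕜 := ℝ)
        have hc := (Complex.continuous_ofReal.tendsto 0).comp h0
        simp only [Function.comp, Complex.ofReal_zero] at hc
        refine hc.congr fun N => ?_
        simp [Function.comp]
      have : Tendsto (fun N : ℕ => w * ((N : ℂ))⁻¹) atTop (nhds 0) := by
        simpa using hr.const_mul w
      refine this.congr fun N => (div_eq_mul_inv w _).symm
    · filter_upwards [eventually_ge_atTop 1] with N hN
      simp only [Set.mem_compl_iff, Set.mem_singleton_iff]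
      intro h
      rcases div_eq_zero_iff.mp h with h | h
      · exact hw h
      · rw [Nat.cast_eq_zero] at h; omega
  have hcomp := hslope.comp hdiv
  have h2 : Tendsto (fun N : ℕ => w * slope Complex.exp 0 (w / N)) atTop (nhds w) := by
    simpa using hcomp.const_mul w
  refine h2.congr' ?_
  filter_upwards [eventually_ge_atTop 1] with N hN
  have hN0 : (N : ℂ) ≠ 0 := by
    rw [Nat.cast_ne_zero]; omega
  have hwN : w / (N : ℂ) ≠ 0 := div_ne_zero hw hN0
  rw [slope_def_field]
  rw [Complex.exp_zero, sub_zero]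
  field_simp

lemma pker_nonneg (d : ℕ) [NeZero d] (α : ℝ) (z : Fin d → ℤ) : 0 ≤ pker d α z := by
  unfold pker
  split
  · exact le_refl 0
  · apply mul_nonneg (Real.rpow_nonneg (znorm_nonneg d z) _)
    apply add_nonneg <;> split <;> norm_num

/-- for `α > 1`, `m = Σ_{z≠0} z p(z)` converges absolutely, and
`lim_{N→∞} N Σ_{z≠0} p(z)(e^{iβ(z·a)/N} − 1) = iβ (m·a)`. -/
theorem statement9 (d : ℕ) [NeZero d] (hd : 1 ≤ d) (α : ℝ) (hα : 1 < α)
    (a : Fin d → ℝ) (β : ℝ) :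
    Summable (fun z : Fin d → ℤ => znorm d z * pker d α z) ∧
    Filter.Tendsto
      (fun N : ℕ => ((N : ℝ) : ℂ) *
        ∑' z : Fin d → ℤ, (pker d α z : ℂ) *
          (Complex.exp (Complex.I * (β : ℂ) * ((∑ i, (z i : ℝ) * a i : ℝ) : ℂ) / (N : ℂ)) - 1))
      Filter.atTop
      (nhds (Complex.I * (β : ℂ) *
        ((∑ i, (∑' z : Fin d → ℤ, (z i : ℝ) * pker d α z) * a i : ℝ) : ℂ))) := by
  have hs : (d : ℝ) < (d : ℝ) + α - 1 := by linarith
  have hMaj := summable_znorm_rpow hd hs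
  -- the bound znorm * pker ≤ 3 * Φ
  have hbound1 : ∀ z : Fin d → ℤ, znorm d z * pker d α z ≤
      3 * (if z = 0 then 0 else znorm d z ^ (-((d : ℝ) + α - 1))) := by
    intro z
    by_cases hz : z = 0
    · simp [hz, pker, znorm]
    rw [if_neg hz]
    have hM0 : 0 < znorm d z := lt_of_lt_of_le one_pos (one_le_znorm hz)
    set c := (if 0 < z 0 then (2:ℝ) else 0) + (if z 0 = 0 then 1 else 0) with hcdef
    have hc : c ≤ 3 := by rw [hcdef]; split_ifs <;> norm_num
    have hc0 : (0:ℝ) ≤ c := by rw [hcdef]; split_ifs <;> norm_num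
    rw [pker, if_neg hz, ← hcdef]
    have key : znorm d z * znorm d z ^ (-((d : ℝ) + α)) = znorm d z ^ (-((d : ℝ) + α - 1)) := by
      nth_rewrite 1 [← Real.rpow_one (znorm d z)]
      rw [← Real.rpow_add hM0]
      ring_nf
    calc znorm d z * (znorm d z ^ (-((d : ℝ) + α)) * c) =
          (znorm d z * znorm d z ^ (-((d : ℝ) + α))) * c := by ring
      _ = znorm d z ^ (-((d : ℝ) + α - 1)) * c := by rw [key]
      _ ≤ znorm d z ^ (-((d : ℝ) + α - 1)) * 3 :=
          mul_le_mul_of_nonneg_left hc (Real.rpow_nonneg hM0.le _)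
      _ = 3 * znorm d z ^ (-((d : ℝ) + α - 1)) := by ring
  have hF0 : ∀ z, 0 ≤ znorm d z * pker d α z :=
    fun z => mul_nonneg (znorm_nonneg d z) (pker_nonneg d α z)
  have part1 : Summable (fun z : Fin d → ℤ => znorm d z * pker d α z) :=
    Summable.of_nonneg_of_le hF0 hbound1 (hMaj.mul_left 3)
  refine ⟨part1, ?_⟩
  set A := ∑ i, |a i| with hAdef
  have hA0 : 0 ≤ A := Finset.sum_nonneg fun i _ => abs_nonneg _
  have habsc : ∀ z : Fin d → ℤ, |∑ i, (z i : ℝ) * a i| ≤ znorm d z * A := by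
    intro z
    calc |∑ i, (z i:ℝ) * a i| ≤ ∑ i, |(z i:ℝ) * a i| := Finset.abs_sum_le_sum_abs _ _
      _ ≤ ∑ i, znorm d z * |a i| := by
          apply Finset.sum_le_sum
          intro i _
          rw [abs_mul]
          exact mul_le_mul_of_nonneg_right (abs_le_znorm d z i) (abs_nonneg _)
      _ = znorm d z * A := by rw [hAdef, Finset.mul_sum]
  have hbound_sum : Summable (fun z : Fin d → ℤ => |β| * A * (znorm d z * pker d α z)) :=
    part1.mul_left _
  have hab : ∀ z : Fin d → ℤ, Tendsto (fun N : ℕ =>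
      (N : ℂ) * ((pker d α z : ℂ) *
        (Complex.exp (Complex.I * (β : ℂ) * ((∑ i, (z i : ℝ) * a i : ℝ) : ℂ) / (N : ℂ)) - 1)))
      atTop (nhds ((pker d α z : ℂ) *
        (Complex.I * (β : ℂ) * ((∑ i, (z i : ℝ) * a i : ℝ) : ℂ)))) := by
    intro z
    have h := (tendsto_nat_mul_exp_div_sub_one
      (Complex.I * (β : ℂ) * ((∑ i, (z i : ℝ) * a i : ℝ) : ℂ))).const_mul
      ((pker d α z : ℝ) : ℂ)
    refine h.congr fun N => ?_
    ring
  have h_bound : ∀ᶠ N : ℕ in atTop, ∀ z : Fin d → ℤ,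
      ‖(N : ℂ) * ((pker d α z : ℂ) *
        (Complex.exp (Complex.I * (β : ℂ) * ((∑ i, (z i : ℝ) * a i : ℝ) : ℂ) / (N : ℂ)) - 1))‖
      ≤ |β| * A * (znorm d z * pker d α z) := by
    filter_upwards [eventually_ge_atTop 1] with N hN
    intro z
    have hN0 : (0:ℝ) < N := by exact_mod_cast hN
    set c := ∑ i, (z i : ℝ) * a i with hcdef
    have hexp : Complex.I * (β : ℂ) * (c : ℂ) / (N : ℂ) = ((β * c / N : ℝ) : ℂ) * Complex.I := by
      push_cast; ring
    have hp0 := pker_nonneg d α z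
    have h1 : ‖(N : ℂ) * ((pker d α z : ℂ) *
        (Complex.exp (Complex.I * (β : ℂ) * (c : ℂ) / (N : ℂ)) - 1))‖ =
        (N:ℝ) * (pker d α z * ‖Complex.exp (((β * c / N : ℝ):ℂ) * Complex.I) - 1‖) := by
      rw [hexp, norm_mul, norm_mul, Complex.norm_natCast, Complex.norm_real,
        Real.norm_eq_abs, abs_of_nonneg hp0]
    rw [h1]
    have h2 := norm_exp_mul_I_sub_one_le (β * c / N)
    have h3 : |β * c / N| = |β| * |c| / N := by
      rw [abs_div, abs_mul, Nat.abs_cast]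
    have h4 : ‖Complex.exp (((β * c / N : ℝ):ℂ) * Complex.I) - 1‖ ≤ |β| * |c| / N :=
      h3 ▸ h2
    calc (N:ℝ) * (pker d α z * ‖Complex.exp (((β * c / N : ℝ):ℂ) * Complex.I) - 1‖)
        ≤ (N:ℝ) * (pker d α z * (|β| * |c| / N)) :=
          mul_le_mul_of_nonneg_left (mul_le_mul_of_nonneg_left h4 hp0) hN0.le
      _ = pker d α z * (|β| * |c|) := by field_simp
      _ ≤ |β| * A * (znorm d z * pker d α z) := by
          nlinarith [mul_le_mul_of_nonneg_left (habsc z)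
            (mul_nonneg (abs_nonneg β) hp0), abs_nonneg c, znorm_nonneg d z]
  have hDC := tendsto_tsum_of_dominated_convergence hbound_sum hab h_bound
  have hsum_i : ∀ i : Fin d, Summable (fun z : Fin d → ℤ => (z i : ℝ) * pker d α z) := by
    intro i
    refine Summable.of_norm_bounded part1 fun z => ?_
    rw [Real.norm_eq_abs, abs_mul, abs_of_nonneg (pker_nonneg d α z)]
    exact mul_le_mul_of_nonneg_right (abs_le_znorm d z i) (pker_nonneg d α z)
  have hreal : ∑' z : Fin d → ℤ, (∑ i, (z i : ℝ) * a i) * pker d α z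
      = ∑ i, (∑' z : Fin d → ℤ, (z i : ℝ) * pker d α z) * a i := by
    have h1 : ∀ z : Fin d → ℤ, (∑ i, (z i:ℝ) * a i) * pker d α z
        = ∑ i, ((z i:ℝ) * pker d α z) * a i := by
      intro z
      rw [Finset.sum_mul]
      exact Finset.sum_congr rfl fun i _ => by ring
    rw [tsum_congr h1, Summable.tsum_finsetSum (fun i _ => (hsum_i i).mul_right (a i))]
    exact Finset.sum_congr rfl fun i _ => tsum_mul_right
  have hRHS : (∑' z : Fin d → ℤ, (pker d α z : ℂ) *
      (Complex.I * (β : ℂ) * ((∑ i, (z i : ℝ) * a i : ℝ) : ℂ)))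
      = Complex.I * (β : ℂ) *
        ((∑ i, (∑' z : Fin d → ℤ, (z i : ℝ) * pker d α z) * a i : ℝ) : ℂ) := by
    have h1 : ∀ z : Fin d → ℤ, (pker d α z : ℂ) *
        (Complex.I * (β : ℂ) * ((∑ i, (z i : ℝ) * a i : ℝ) : ℂ))
        = Complex.I * (β : ℂ) * (((∑ i, (z i : ℝ) * a i) * pker d α z : ℝ) : ℂ) := by
      intro z
      push_cast
      ring
    rw [tsum_congr h1, tsum_mul_left, ← Complex.ofReal_tsum, hreal]
  rw [← hRHS]
  refine Tendsto.congr (fun N => ?_) hDC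
  rw [tsum_mul_left]
  norm_cast
end

section
/- Let d = 1 and 0 < α ≤ 1, and let φ(θ) = Σ_{x∈ℤ, x≠0} cos(θx) s(x) be the characteristic function of the step distribution s on ℤ. Then lim_{θ→0} (1 − φ(θ)) / |θ|^α = (1/s*) ∫_ℝ (1 − cos u) / |u|^{1+α} du, and this integral is finite and strictly positive. -/
open MeasureTheory Filter Real Set

noncomputable def fK (α : ℝ) (u : ℝ) : ℝ := (1 - Real.cos u) / |u| ^ (1 + α)

lemma fK_nonneg (α u : ℝ) : 0 ≤ fK α u :=
  div_nonneg (by linarith [Real.cos_le_one u]) (Real.rpow_nonneg (abs_nonneg u) _)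

lemma one_sub_cos_le (v : ℝ) : 1 - Real.cos v ≤ v ^ 2 / 2 := by
  have h := Real.cos_two_mul' (v / 2)
  have h2 := Real.sin_sq_add_cos_sq (v / 2)
  have h3 : Real.sin (v/2) ^ 2 ≤ (v/2) ^ 2 := Real.sin_sq_le_sq
  have hv : (2 : ℝ) * (v/2) = v := by ring
  rw [hv] at h
  nlinarith

lemma one_sub_cos_nonneg (v : ℝ) : 0 ≤ 1 - Real.cos v := by
  linarith [Real.cos_le_one v]

lemma fK_le_half (α : ℝ) (v : ℝ) : fK α v ≤ |v| ^ (1 - α) / 2 := by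
  rcases eq_or_ne v 0 with rfl | hv
  · simp only [fK, Real.cos_zero, sub_self, zero_div]
    positivity
  · have h0 : (0:ℝ) < |v| := abs_pos.2 hv
    have hp : (0:ℝ) < |v| ^ (1 + α) := Real.rpow_pos_of_pos h0 _
    have h1 : fK α v ≤ (v^2/2) / |v| ^ (1+α) := by
      unfold fK; gcongr; exact one_sub_cos_le v
    have h2 : (v^2/2) / |v| ^ (1+α) = |v| ^ (1 - α) / 2 := by
      rw [← sq_abs, ← Real.rpow_natCast |v| 2]
      rw [div_div, mul_comm, ← div_div, ← Real.rpow_sub h0]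
      norm_num
      ring_nf
    linarith

lemma fK_le_two_div (α : ℝ) (v : ℝ) : fK α v ≤ 2 / |v| ^ (1 + α) := by
  rcases eq_or_ne v 0 with rfl | hv
  · simp only [fK, abs_zero, Real.cos_zero, sub_self, zero_div]
    positivity
  · have h0 : (0:ℝ) < |v| := abs_pos.2 hv
    have hp : (0:ℝ) < |v| ^ (1 + α) := Real.rpow_pos_of_pos h0 _
    unfold fK; gcongr
    linarith [Real.neg_one_le_cos v]

lemma fK_bound {α : ℝ} (hα0 : 0 < α) (hα1 : α ≤ 1) {u v : ℝ} (h : |v - u| ≤ 1) :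
    fK α v ≤ 32 * (1 + |u|) ^ (-(1 + α)) := by
  have hu0 : (0:ℝ) < 1 + |u| := by positivity
  rcases le_or_gt (|u|) 3 with hu | hu
  · -- |u| ≤ 3, so |v| ≤ 4 and fK ≤ 2 while RHS ≥ 2
    have hv4 : |v| ≤ 4 := by
      have : |v| ≤ |v - u| + |u| := by
        calc |v| = |v - u + u| := by ring_nf
        _ ≤ |v - u| + |u| := abs_add_le _ _
      linarith
    have h1 : fK α v ≤ 2 := by
      have := fK_le_half α v
      have h2 : |v| ^ (1 - α) ≤ 4 := by
        calc |v| ^ (1 - α) ≤ (4:ℝ) ^ (1 - α) :=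
              Real.rpow_le_rpow (abs_nonneg v) hv4 (by linarith)
          _ ≤ (4:ℝ) ^ (1:ℝ) := Real.rpow_le_rpow_of_exponent_le (by norm_num) (by linarith)
          _ = 4 := Real.rpow_one 4
      linarith
    have h2 : (1/16 : ℝ) ≤ (1 + |u|) ^ (-(1 + α)) := by
      calc (1/16 : ℝ) = (4:ℝ) ^ (-(2:ℝ)) := by
            rw [Real.rpow_neg (by norm_num), show ((2:ℝ)) = ((2:ℕ):ℝ) by norm_num,
              Real.rpow_natCast]; norm_num
        _ ≤ (4:ℝ) ^ (-(1+α)) := Real.rpow_le_rpow_of_exponent_le (by norm_num) (by linarith)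
        _ ≤ (1 + |u|) ^ (-(1+α)) :=
            Real.rpow_le_rpow_of_nonpos hu0 (by linarith) (by linarith)
    linarith
  · -- |u| > 3, so |v| ≥ (1+|u|)/2
    have hv : (1 + |u|)/2 ≤ |v| := by
      have : |u| ≤ |u - v| + |v| := by
        calc |u| = |u - v + v| := by ring_nf
        _ ≤ |u - v| + |v| := abs_add_le _ _
      rw [abs_sub_comm] at this
      linarith
    have hv0 : (0:ℝ) < (1 + |u|)/2 := by positivity
    have h1 : fK α v ≤ 2 / ((1 + |u|)/2) ^ (1 + α) := by
      refine (fK_le_two_div α v).trans ?_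
      have := Real.rpow_le_rpow hv0.le hv (by linarith : (0:ℝ) ≤ 1 + α)
      gcongr
    have h2 : ((1 + |u|)/2) ^ (1 + α) = (1 + |u|) ^ (1+α) / 2 ^ (1+α) := by
      rw [Real.div_rpow hu0.le (by norm_num)]
    have h3 : (2:ℝ) ^ (1+α) ≤ 4 := by
      calc (2:ℝ) ^ (1+α) ≤ (2:ℝ) ^ (2:ℝ) := Real.rpow_le_rpow_of_exponent_le (by norm_num) (by linarith)
        _ = 4 := by
          rw [show ((2:ℝ)) = ((2:ℕ):ℝ) by norm_num, Real.rpow_natCast]; norm_num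
    have hup : (0:ℝ) < (1 + |u|) ^ (1+α) := Real.rpow_pos_of_pos hu0 _
    have h4 : 2 / ((1 + |u|)/2) ^ (1 + α) ≤ 8 / (1 + |u|) ^ (1+α) := by
      rw [h2, div_div_eq_mul_div]
      rw [div_le_div_iff₀ (by positivity) hup]
      nlinarith
    have h5 : (8:ℝ) / (1 + |u|) ^ (1+α) = 8 * (1 + |u|) ^ (-(1+α)) := by
      rw [Real.rpow_neg hu0.le, div_eq_mul_inv]
    have h6 : (8:ℝ) * (1 + |u|) ^ (-(1+α)) ≤ 32 * (1 + |u|) ^ (-(1+α)) := by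
      have : (0:ℝ) ≤ (1 + |u|) ^ (-(1+α)) := Real.rpow_nonneg hu0.le _
      nlinarith
    linarith

lemma G_integrable {α : ℝ} (hα0 : 0 < α) :
    Integrable (fun u : ℝ => 32 * (1 + |u|) ^ (-(1 + α))) := by
  have h : Integrable (fun u : ℝ => ((1:ℝ) + ‖u‖) ^ (-(1 + α))) :=
    integrable_one_add_norm (by simp; linarith)
  simpa [Real.norm_eq_abs] using h.const_mul 32

lemma fK_measurable {α : ℝ} (hα0 : 0 < α) : Measurable (fK α) :=
  (measurable_const.sub Real.measurable_cos).div
    ((Real.continuous_rpow_const (by linarith)).comp continuous_abs).measurable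

lemma fK_integrable {α : ℝ} (hα0 : 0 < α) (hα1 : α ≤ 1) : Integrable (fK α) := by
  refine (G_integrable hα0).mono' (fK_measurable hα0).aestronglyMeasurable ?_
  filter_upwards with u
  rw [Real.norm_eq_abs, abs_of_nonneg (fK_nonneg α u)]
  exact fK_bound hα0 hα1 (by simp)

lemma fK_integral_pos {α : ℝ} (hα0 : 0 < α) (hα1 : α ≤ 1) : 0 < ∫ u, fK α u := by
  rw [integral_pos_iff_support_of_nonneg (fun u => fK_nonneg α u) (fK_integrable hα0 hα1)]
  have hsub : Ioo (0:ℝ) π ⊆ Function.support (fK α) := by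
    intro u hu
    have hcos : Real.cos u < 1 := by
      have h := Real.strictAntiOn_cos (Set.mem_Icc.2 ⟨le_refl 0, Real.pi_pos.le⟩)
        (Set.mem_Icc.2 ⟨hu.1.le, hu.2.le⟩) hu.1
      simpa using h
    have hpos : 0 < fK α u := by
      have hu0 : (0:ℝ) < |u| := abs_pos.2 (ne_of_gt hu.1)
      exact div_pos (by linarith) (Real.rpow_pos_of_pos hu0 _)
    exact ne_of_gt hpos
  calc (0:ENNReal) < volume (Ioo (0:ℝ) π) := by
        rw [Real.volume_Ioo]; simp [Real.pi_pos]
    _ ≤ volume (Function.support (fK α)) := measure_mono hsub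

lemma ceil_meas (t : ℝ) : Measurable (fun u : ℝ => ((⌈u / t⌉ : ℤ) : ℝ)) :=
  Measurable.comp (measurable_from_top) (Int.measurable_ceil.comp (measurable_id.div_const t))

lemma Ft_measurable {α : ℝ} (hα0 : 0 < α) (t : ℝ) :
    Measurable (fun u : ℝ => fK α (t * ⌈u / t⌉)) :=
  (fK_measurable hα0).comp ((ceil_meas t).const_mul t)

lemma ceil_bounds {t : ℝ} (ht : 0 < t) (u : ℝ) :
    u ≤ t * ⌈u / t⌉ ∧ t * ⌈u / t⌉ < u + t := by
  constructor
  · have h := Int.le_ceil (u / t)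
    calc u = (u / t) * t := by field_simp
      _ ≤ (⌈u / t⌉ : ℝ) * t := by gcongr
      _ = t * ⌈u / t⌉ := mul_comm _ _
  · have h := Int.ceil_lt_add_one (u / t)
    calc t * (⌈u / t⌉ : ℝ) = (⌈u / t⌉ : ℝ) * t := mul_comm _ _
      _ < (u / t + 1) * t := by gcongr
      _ = u + t := by field_simp

lemma Ft_bound {α : ℝ} (hα0 : 0 < α) (hα1 : α ≤ 1) {t : ℝ} (ht : 0 < t) (ht1 : t ≤ 1)
    (u : ℝ) : fK α (t * ⌈u / t⌉) ≤ 32 * (1 + |u|) ^ (-(1 + α)) := by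
  refine fK_bound hα0 hα1 ?_
  obtain ⟨h1, h2⟩ := ceil_bounds ht u
  rw [abs_le]
  constructor <;> nlinarith

lemma Ft_integrable {α : ℝ} (hα0 : 0 < α) (hα1 : α ≤ 1) {t : ℝ} (ht : 0 < t) (ht1 : t ≤ 1) :
    Integrable (fun u : ℝ => fK α (t * ⌈u / t⌉)) := by
  refine (G_integrable hα0).mono' (Ft_measurable hα0 t).aestronglyMeasurable ?_
  filter_upwards with u
  rw [Real.norm_eq_abs, abs_of_nonneg (fK_nonneg α _)]
  exact Ft_bound hα0 hα1 ht ht1 u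

lemma sum_eq_integral {α : ℝ} (hα0 : 0 < α) (hα1 : α ≤ 1) {t : ℝ} (ht : 0 < t) (ht1 : t ≤ 1) :
    HasSum (fun x : ℤ => fK α (t * x) * t) (∫ u, fK α (t * ⌈u / t⌉)) := by
  set s : ℤ → Set ℝ := fun x => Ioc (((x : ℝ) - 1) * t) (x * t) with hs
  have hm : ∀ x : ℤ, MeasurableSet (s x) := fun x => measurableSet_Ioc
  have hd : Pairwise (Function.onFun Disjoint s) := by
    rw [pairwise_disjoint_on]
    intro i j hij
    rw [hs]
    simp only
    rw [Set.Ioc_disjoint_Ioc]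
    have : (i : ℝ) ≤ (j : ℝ) - 1 := by
      have : (i : ℝ) + 1 ≤ j := by exact_mod_cast hij
      linarith
    calc min ((i:ℝ) * t) ((j:ℝ) * t) = (i:ℝ) * t := by
          rw [min_eq_left]; gcongr
      _ ≤ ((j:ℝ) - 1) * t := by gcongr
      _ ≤ max (((i:ℝ) - 1) * t) (((j:ℝ) - 1) * t) := le_max_right _ _
  have hunion : (⋃ x : ℤ, s x) = univ := by
    refine Set.eq_univ_of_forall fun u => ?_
    refine Set.mem_iUnion.2 ⟨⌈u / t⌉, ?_⟩
    obtain ⟨h1, h2⟩ := ceil_bounds ht u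
    constructor
    · nlinarith
    · nlinarith [h1]
  have hfi : IntegrableOn (fun u : ℝ => fK α (t * ⌈u / t⌉)) (⋃ x : ℤ, s x) := by
    rw [hunion]
    exact (Ft_integrable hα0 hα1 ht ht1).integrableOn
  have h := hasSum_integral_iUnion hm hd hfi
  rw [hunion] at h
  rw [Measure.restrict_univ] at h
  convert h using 2 with x
  case e'_3 => rfl
  have hcell : ∀ u ∈ s x, fK α (t * ⌈u / t⌉) = fK α (t * x) := by
    intro u hu
    have hceil : ⌈u / t⌉ = x := by
      rw [Int.ceil_eq_iff]
      constructor
      · rw [lt_div_iff₀ ht] at *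
        · exact hu.1.trans_eq' (by push_cast; ring)
      · rw [div_le_iff₀ ht]
        exact hu.2
    rw [hceil]
  rw [setIntegral_congr_fun (hm x) hcell]
  rw [setIntegral_const, measureReal_def, Real.volume_Ioc]
  rw [ENNReal.toReal_ofReal (by nlinarith : (0:ℝ) ≤ (x:ℝ) * t - ((x:ℝ) - 1) * t)]
  rw [smul_eq_mul]
  ring

lemma ae_ne_zero : ∀ᵐ u : ℝ, u ≠ 0 := by
  rw [ae_iff]
  have : {u : ℝ | ¬u ≠ 0} = {0} := by ext u; simp
  rw [this]
  exact measure_singleton 0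

lemma fK_continuousAt {α : ℝ} (hα0 : 0 < α) {u : ℝ} (hu : u ≠ 0) :
    ContinuousAt (fK α) u := by
  have hden : ContinuousAt (fun v : ℝ => |v| ^ (1 + α)) u :=
    ((Real.continuous_rpow_const (by linarith)).comp continuous_abs).continuousAt
  have hnum : ContinuousAt (fun v : ℝ => 1 - Real.cos v) u :=
    (continuous_const.sub Real.continuous_cos).continuousAt
  exact hnum.div hden (by positivity)

lemma tendsto_ceil_mul {u : ℝ} :
    Tendsto (fun t : ℝ => t * ⌈u / t⌉) (nhdsWithin 0 (Ioi 0)) (nhds u) := by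
  have hlow : ∀ᶠ t : ℝ in nhdsWithin 0 (Ioi 0), u ≤ t * ⌈u / t⌉ := by
    filter_upwards [eventually_mem_nhdsWithin] with t ht
    exact (ceil_bounds ht u).1
  have hhigh : ∀ᶠ t : ℝ in nhdsWithin 0 (Ioi 0), t * ⌈u / t⌉ ≤ u + t := by
    filter_upwards [eventually_mem_nhdsWithin] with t ht
    exact (ceil_bounds ht u).2.le
  have h1 : Tendsto (fun _ : ℝ => u) (nhdsWithin 0 (Ioi 0)) (nhds u) := tendsto_const_nhds
  have h2 : Tendsto (fun t : ℝ => u + t) (nhdsWithin 0 (Ioi 0)) (nhds u) := by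
    have : Tendsto (fun t : ℝ => t) (nhdsWithin 0 (Ioi 0)) (nhds 0) :=
      tendsto_id.mono_left nhdsWithin_le_nhds
    simpa using tendsto_const_nhds.add this
  exact tendsto_of_tendsto_of_tendsto_of_le_of_le' h1 h2 hlow hhigh

lemma tendsto_integral_Ft {α : ℝ} (hα0 : 0 < α) (hα1 : α ≤ 1) :
    Tendsto (fun t : ℝ => ∫ u, fK α (t * ⌈u / t⌉)) (nhdsWithin 0 (Ioi 0))
      (nhds (∫ u, fK α u)) := by
  refine tendsto_integral_filter_of_dominated_convergence
    (fun u => 32 * (1 + |u|) ^ (-(1 + α)))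
    (Eventually.of_forall fun t => (Ft_measurable hα0 t).aestronglyMeasurable)
    ?_ (G_integrable hα0) ?_
  · filter_upwards [Ioc_mem_nhdsGT (by norm_num : (0:ℝ) < 1)] with t ht
    filter_upwards with u
    rw [Real.norm_eq_abs, abs_of_nonneg (fK_nonneg α _)]
    exact Ft_bound hα0 hα1 ht.1 ht.2 u
  · filter_upwards [ae_ne_zero] with u hu
    exact ((fK_continuousAt hα0 hu).tendsto).comp tendsto_ceil_mul


/-- The normalizing constant `s* = Σ_{x∈ℤ, x≠0} |x|^{-(1+α)}` in dimension one. -/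
noncomputable def sstar1 (α : ℝ) : ℝ :=
  ∑' x : ℤ, if x = 0 then 0 else |(x : ℝ)| ^ (-(1 + α))

/-- The step distribution `s(x) = |x|^{-(1+α)}/s*` on `ℤ`, `s(0) = 0`. -/
noncomputable def sfun1 (α : ℝ) (x : ℤ) : ℝ :=
  if x = 0 then 0 else |(x : ℝ)| ^ (-(1 + α)) / sstar1 α

/-- The characteristic function `φ(θ) = Σ_{x≠0} cos(θx) s(x)`. -/
noncomputable def phi1 (α : ℝ) (θ : ℝ) : ℝ :=
  ∑' x : ℤ, Real.cos (θ * x) * sfun1 α x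

lemma summable_aux {α : ℝ} (hα0 : 0 < α) : Summable (fun x : ℤ => |(x:ℝ)| ^ (-(1+α))) :=
  Real.summable_abs_int_rpow (by linarith)

lemma sstar1_eq {α : ℝ} (hα0 : 0 < α) : sstar1 α = ∑' x : ℤ, |(x:ℝ)| ^ (-(1+α)) := by
  unfold sstar1
  refine tsum_congr fun x => ?_
  rcases eq_or_ne x 0 with rfl | hx
  · rw [if_pos rfl, Int.cast_zero, abs_zero, Real.zero_rpow (show -(1+α) ≠ 0 by linarith)]
  · simp [hx]

lemma sstar1_pos {α : ℝ} (hα0 : 0 < α) : 0 < sstar1 α := by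
  rw [sstar1_eq hα0]
  refine Summable.tsum_pos (summable_aux hα0) (fun x => Real.rpow_nonneg (abs_nonneg _) _) 1 ?_
  simp

lemma sfun1_eq {α : ℝ} (hα0 : 0 < α) (x : ℤ) :
    sfun1 α x = |(x:ℝ)| ^ (-(1+α)) / sstar1 α := by
  unfold sfun1
  rcases eq_or_ne x 0 with rfl | hx
  · rw [if_pos rfl, Int.cast_zero, abs_zero, Real.zero_rpow (show -(1+α) ≠ 0 by linarith),
      zero_div]
  · simp [hx]

lemma sfun1_nonneg {α : ℝ} (hα0 : 0 < α) (x : ℤ) : 0 ≤ sfun1 α x := by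
  rw [sfun1_eq hα0]
  exact div_nonneg (Real.rpow_nonneg (abs_nonneg _) _) (sstar1_pos hα0).le

lemma summable_sfun1 {α : ℝ} (hα0 : 0 < α) : Summable (sfun1 α) :=
  ((summable_aux hα0).div_const (sstar1 α)).congr fun x => (sfun1_eq hα0 x).symm

lemma tsum_sfun1 {α : ℝ} (hα0 : 0 < α) : ∑' x : ℤ, sfun1 α x = 1 := by
  rw [tsum_congr (sfun1_eq hα0), tsum_div_const, ← sstar1_eq hα0,
    div_self (sstar1_pos hα0).ne']

lemma summable_cos {α : ℝ} (hα0 : 0 < α) (θ : ℝ) :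
    Summable (fun x : ℤ => Real.cos (θ * x) * sfun1 α x) := by
  refine Summable.of_abs ?_
  refine Summable.of_nonneg_of_le (fun x => abs_nonneg _) (fun x => ?_) (summable_sfun1 hα0)
  rw [abs_mul]
  calc |Real.cos (θ*x)| * |sfun1 α x| ≤ 1 * |sfun1 α x| := by
        gcongr; exact Real.abs_cos_le_one _
    _ = sfun1 α x := by rw [one_mul, abs_of_nonneg (sfun1_nonneg hα0 x)]

lemma one_sub_phi1 {α : ℝ} (hα0 : 0 < α) (θ : ℝ) :
    1 - phi1 α θ = ∑' x : ℤ, (1 - Real.cos (θ * x)) * sfun1 α x := by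
  unfold phi1
  rw [eq_comm]
  calc ∑' x : ℤ, (1 - Real.cos (θ * x)) * sfun1 α x
      = ∑' x : ℤ, (sfun1 α x - Real.cos (θ * x) * sfun1 α x) :=
        tsum_congr fun x => by ring
    _ = (∑' x : ℤ, sfun1 α x) - ∑' x : ℤ, Real.cos (θ * x) * sfun1 α x :=
        Summable.tsum_sub (summable_sfun1 hα0) (summable_cos hα0 θ)
    _ = 1 - ∑' x : ℤ, Real.cos (θ * x) * sfun1 α x := by rw [tsum_sfun1 hα0]

lemma ratio_eq {α : ℝ} (hα0 : 0 < α) {θ : ℝ} (hθ : θ ≠ 0) :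
    (1 - phi1 α θ) / |θ| ^ α = (sstar1 α)⁻¹ * ∑' x : ℤ, fK α (|θ| * x) * |θ| := by
  rw [one_sub_phi1 hα0 θ, ← tsum_div_const, ← tsum_mul_left]
  refine tsum_congr fun x => ?_
  have haθ : 0 < |θ| := abs_pos.2 hθ
  rcases eq_or_ne x 0 with rfl | hx
  · simp [sfun1, fK]
  · have hax : 0 < |(x:ℝ)| := by
      rw [abs_pos]
      exact_mod_cast hx
    have hcos : Real.cos (|θ| * x) = Real.cos (θ * x) := by
      rcases abs_choice θ with h | h <;> rw [h]
      rw [neg_mul, Real.cos_neg]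
    unfold fK
    rw [hcos, sfun1_eq hα0, abs_mul, abs_abs,
      Real.mul_rpow haθ.le (abs_nonneg _), Real.rpow_neg (abs_nonneg _)]
    have hθa : |θ| ^ ((1:ℝ)+α) = |θ| * |θ| ^ α := by
      rw [Real.rpow_add haθ, Real.rpow_one]
    rw [hθa]
    have h1 : (|(x:ℝ)| ^ (1+α)) ≠ 0 := ne_of_gt (Real.rpow_pos_of_pos hax _)
    have h2 : |θ| ^ α ≠ 0 := ne_of_gt (Real.rpow_pos_of_pos haθ _)
    have h3 : sstar1 α ≠ 0 := (sstar1_pos hα0).ne'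
    field_simp

/-- for `d = 1` and `0 < α ≤ 1`,
`lim_{θ→0} (1 − φ(θ))/|θ|^α = (1/s*) ∫_ℝ (1 − cos u)/|u|^{1+α} du`, the integral being
finite and strictly positive. -/
theorem statement11 (α : ℝ) (hα0 : 0 < α) (hα1 : α ≤ 1) :
    (MeasureTheory.Integrable fun u : ℝ => (1 - Real.cos u) / |u| ^ (1 + α)) ∧
    (0 < ∫ u : ℝ, (1 - Real.cos u) / |u| ^ (1 + α)) ∧
    Filter.Tendsto (fun θ : ℝ => (1 - phi1 α θ) / |θ| ^ α)
      (nhdsWithin 0 {(0 : ℝ)}ᶜ)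
      (nhds ((sstar1 α)⁻¹ * ∫ u : ℝ, (1 - Real.cos u) / |u| ^ (1 + α))) := by
  refine ⟨fK_integrable hα0 hα1, fK_integral_pos hα0 hα1, ?_⟩
  have key : Tendsto (fun t : ℝ => (sstar1 α)⁻¹ * ∑' x : ℤ, fK α (t * x) * t)
      (nhdsWithin 0 (Ioi 0)) (nhds ((sstar1 α)⁻¹ * ∫ u : ℝ, fK α u)) := by
    refine Tendsto.const_mul _ ?_
    refine Tendsto.congr' ?_ (tendsto_integral_Ft hα0 hα1)
    filter_upwards [Ioc_mem_nhdsGT (show (0:ℝ) < 1 by norm_num)] with t ht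
    exact ((sum_eq_integral hα0 hα1 ht.1 ht.2).tsum_eq).symm
  have comp := key.comp (tendsto_abs_nhdsNE_zero (G := ℝ))
  refine Tendsto.congr' ?_ comp
  filter_upwards [eventually_mem_nhdsWithin] with θ hθ
  exact (ratio_eq hα0 hθ).symm
end
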